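/- arXiv:0808.3649 — 3 statements merged into one kernel-verified Lean document; each statement's English description precedes it below -/
import Mathlib

section
/- If H₁ ⊂ H₂ ⊂ H₃ are three hulls in ℍ w.r.t. ∞, then H₂/H₁ ⊂ H₃/H₁ and (H₃/H₁)/(H₂/H₁) = H₃/H₂. -/
open Complex Set Bornology Filter MeasureTheory Metric
open scoped Topology

noncomputable section

def UHP : Set ℂ := {z : ℂ | 0 < z.im}

def IsHull (H : Set ℂ) : Prop :=
  H ⊆ UHP ∧ Bornology.IsBounded H ∧ (∀ z ∈ closure H, 0 < z.im → z ∈ H) ∧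
    SimplyConnectedSpace ↥(UHP \ H)

def ConformalOnto (φ : ℂ → ℂ) (U V : Set ℂ) : Prop :=
  AnalyticOnNhd ℂ φ U ∧ Set.InjOn φ U ∧ φ '' U = V

def NormalizedAtInf (φ : ℂ → ℂ) (H : Set ℂ) (c : ℝ) : Prop :=
  ∃ C R : ℝ, 0 < C ∧ ∀ z ∈ UHP \ H, R ≤ ‖z‖ →
    ‖φ z - z - (c : ℂ) / z‖ ≤ C / ‖z‖ ^ 2

def IsLoewnerMap (H : Set ℂ) (φ : ℂ → ℂ) (c : ℝ) : Prop :=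
  ConformalOnto φ (UHP \ H) UHP ∧ NormalizedAtInf φ H c

def SigmaStar (H : Set ℂ) : Set ℂ :=
  (H ∪ (starRingEnd ℂ) '' H ∪ {z : ℂ | z.im = 0 ∧ z ∈ closure H})ᶜ

def IsExtendedLoewnerMap (H : Set ℂ) (φ : ℂ → ℂ) (c : ℝ) : Prop :=
  IsLoewnerMap H φ c ∧ AnalyticOnNhd ℂ φ (SigmaStar H) ∧
    ∀ z ∈ SigmaStar H, φ ((starRingEnd ℂ) z) = (starRingEnd ℂ) (φ z)

def IsLoewnerChain (T : ℝ) (ξ : ℝ → ℝ) (K : ℝ → Set ℂ) (φ : ℝ → ℂ → ℂ) : Prop :=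
  ContinuousOn ξ (Set.Ico 0 T) ∧
  (∀ t ∈ Set.Ico (0:ℝ) T, IsHull (K t) ∧ IsLoewnerMap (K t) (φ t) (2 * t)) ∧
  (∀ z ∈ UHP, φ 0 z = z) ∧
  (∀ t ∈ Set.Ico (0:ℝ) T, ∀ z ∈ UHP \ K t, ∀ s ∈ Set.Icc (0:ℝ) t,
    φ s z ≠ (ξ s : ℂ) ∧ HasDerivAt (fun u => φ u z) (2 / (φ s z - (ξ s : ℂ))) s) ∧
  (∀ s t : ℝ, 0 ≤ s → s ≤ t → t < T → K s ⊆ K t)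

def cayleyT (w₀ w : ℂ) : ℂ := (w - (starRingEnd ℂ) w₀) ⁻¹ * (w - w₀)

def cayleyS (w₀ ζ : ℂ) : ℂ := (1 - ζ)⁻¹ * (w₀ - (starRingEnd ℂ) w₀ * ζ)

lemma sub_conj_ne {w₀ w : ℂ} (h₀ : 0 < w₀.im) (h : 0 < w.im) :
    w - (starRingEnd ℂ) w₀ ≠ 0 := by
  intro hc
  have : (w - (starRingEnd ℂ) w₀).im = 0 := by rw [hc]; simp
  simp [Complex.sub_im, Complex.conj_im] at this
  linarith

lemma cayleyT_mem {w₀ w : ℂ} (h₀ : 0 < w₀.im) (h : 0 < w.im) :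
    cayleyT w₀ w ∈ ball (0:ℂ) 1 := by
  have hden := sub_conj_ne h₀ h
  rw [mem_ball_zero_iff, cayleyT, norm_mul, norm_inv]
  rw [inv_mul_lt_iff₀ (by simpa [norm_pos_iff] using hden), mul_one]
  have h1 : Complex.normSq (w - w₀) < Complex.normSq (w - (starRingEnd ℂ) w₀) := by
    simp only [Complex.normSq_apply, Complex.sub_re, Complex.sub_im, Complex.conj_re,
      Complex.conj_im]
    nlinarith
  have := Real.sqrt_lt_sqrt (Complex.normSq_nonneg _) h1
  simpa [Complex.norm_def] using this

lemma cayleyS_mem {w₀ : ℂ} (h₀ : 0 < w₀.im) {ζ : ℂ} (hζ : ζ ∈ ball (0:ℂ) 1) :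
    0 < (cayleyS w₀ ζ).im := by
  have hζ' : Complex.normSq ζ < 1 := by
    have := mem_ball_zero_iff.mp hζ
    have h2 : ‖ζ‖ < 1 := this
    nlinarith [Complex.sq_norm ζ, norm_nonneg ζ]
  have hden : (1 - ζ) ≠ 0 := by
    intro hc
    have : ζ = 1 := by linear_combination -hc
    rw [this] at hζ'
    simp [Complex.normSq_apply] at hζ'
  rw [cayleyS, inv_mul_eq_div, Complex.div_im, ← sub_div]
  apply div_pos
  · simp only [Complex.sub_im, Complex.sub_re, Complex.one_re, Complex.one_im,
      Complex.mul_im, Complex.mul_re, Complex.conj_re, Complex.conj_im]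
    simp only [Complex.normSq_apply] at hζ'
    nlinarith
  · exact Complex.normSq_pos.mpr hden

lemma one_sub_cayleyT_ne {w₀ w : ℂ} (h₀ : 0 < w₀.im) (h : 0 < w.im) :
    1 - cayleyT w₀ w ≠ 0 := by
  have hden := sub_conj_ne h₀ h
  rw [cayleyT]
  intro hc
  have h2 : (w - (starRingEnd ℂ) w₀) * (1 - (w - (starRingEnd ℂ) w₀)⁻¹ * (w - w₀)) = 0 := by
    rw [hc, mul_zero]
  rw [mul_sub, mul_one, mul_inv_cancel_left₀ hden] at h2
  have h3 : w₀ - (starRingEnd ℂ) w₀ = 0 := by linear_combination h2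
  have : (w₀ - (starRingEnd ℂ) w₀).im = 0 := by rw [h3]; simp
  simp [Complex.sub_im, Complex.conj_im] at this
  linarith

lemma cayleyT_cayleyS {w₀ : ℂ} (h₀ : 0 < w₀.im) {ζ : ℂ} (hζ : ζ ∈ ball (0:ℂ) 1) :
    cayleyT w₀ (cayleyS w₀ ζ) = ζ := by
  have hden : (1 - ζ) ≠ 0 := by
    intro hc
    have hζ1 : ζ = 1 := by linear_combination -hc
    rw [hζ1, mem_ball_zero_iff] at hζ
    simp at hζ
  have hw : w₀ - (starRingEnd ℂ) w₀ ≠ 0 := by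
    intro hc
    have : (w₀ - (starRingEnd ℂ) w₀).im = 0 := by rw [hc]; simp
    simp [Complex.sub_im, Complex.conj_im] at this; linarith
  have hden2 : cayleyS w₀ ζ - (starRingEnd ℂ) w₀ ≠ 0 := by
    rw [cayleyS]
    intro hc
    have : (1 - ζ) * ((1 - ζ)⁻¹ * (w₀ - (starRingEnd ℂ) w₀ * ζ) - (starRingEnd ℂ) w₀) = 0 := by
      rw [hc, mul_zero]
    rw [mul_sub, mul_inv_cancel_left₀ hden] at this
    apply hw
    linear_combination this
  rw [cayleyT, inv_mul_eq_div, div_eq_iff hden2, cayleyS]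
  field_simp
  ring

lemma cayleyS_cayleyT {w₀ w : ℂ} (h₀ : 0 < w₀.im) (h : 0 < w.im) :
    cayleyS w₀ (cayleyT w₀ w) = w := by
  have hden := sub_conj_ne h₀ h
  have hden2 := one_sub_cayleyT_ne h₀ h
  rw [cayleyS, inv_mul_eq_div, div_eq_iff hden2, cayleyT]
  field_simp
  ring

lemma cayleyS_zero (w₀ : ℂ) : cayleyS w₀ 0 = w₀ := by simp [cayleyS]

lemma cayleyT_differentiableAt {w₀ w : ℂ} (h₀ : 0 < w₀.im) (h : 0 < w.im) :
    DifferentiableAt ℂ (cayleyT w₀) w := by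
  have hden := sub_conj_ne h₀ h
  apply DifferentiableAt.mul
  · exact (differentiableAt_id.sub_const _).inv hden
  · exact differentiableAt_id.sub_const _

lemma cayleyS_differentiableAt {w₀ ζ : ℂ} (hden : (1:ℂ) - ζ ≠ 0) :
    DifferentiableAt ℂ (cayleyS w₀) ζ := by
  apply DifferentiableAt.mul
  · exact ((differentiableAt_const _).sub differentiableAt_id).inv hden
  · exact (differentiableAt_const _).sub (differentiableAt_id.const_mul _)

lemma cayley_affine {w₀ w₀' w : ℂ} (h₀ : 0 < w₀.im) (h : 0 < w.im) :
    cayleyS w₀' (cayleyT w₀ w) =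
      (w₀ - (starRingEnd ℂ) w₀)⁻¹ * ((w₀' - (starRingEnd ℂ) w₀') * w
        + ((starRingEnd ℂ) w₀' * w₀ - w₀' * (starRingEnd ℂ) w₀)) := by
  have hden := sub_conj_ne h₀ h
  have hden2 := one_sub_cayleyT_ne h₀ h
  have hw : w₀ - (starRingEnd ℂ) w₀ ≠ 0 := by
    intro hc
    have : (w₀ - (starRingEnd ℂ) w₀).im = 0 := by rw [hc]; simp
    simp [Complex.sub_im, Complex.conj_im] at this; linarith
  rw [cayleyS, cayleyT] at *
  have e : 1 - (w - (starRingEnd ℂ) w₀)⁻¹ * (w - w₀)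
      = (w₀ - (starRingEnd ℂ) w₀) * (w - (starRingEnd ℂ) w₀)⁻¹ := by
    field_simp
    ring
  rw [e, mul_inv, inv_inv, mul_assoc]
  congr 1
  field_simp
  ring

lemma analyticAt_hasStrictDerivAt {f : ℂ → ℂ} {x : ℂ} (h : AnalyticAt ℂ f x) :
    HasStrictDerivAt f (deriv f x) x := by
  obtain ⟨p, hp⟩ := h
  rw [hp.deriv]
  exact hp.hasStrictDerivAt

/-- If `G` is analytic and injective on open `Ω`, then at a point `x ∈ Ω` with
`deriv G x ≠ 0`, the map `F ∘ invFunOn G Ω` is differentiable at `G x`. -/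
lemma diffAt_comp_invFunOn_of_deriv_ne {Ω : Set ℂ} (hΩ : IsOpen Ω) {F G : ℂ → ℂ}
    (hF : AnalyticOnNhd ℂ F Ω) (hG : AnalyticOnNhd ℂ G Ω) (hGinj : Set.InjOn G Ω)
    {x : ℂ} (hx : x ∈ Ω) (hd : deriv G x ≠ 0) :
    DifferentiableAt ℂ (F ∘ Function.invFunOn G Ω) (G x) := by
  have hGsd : HasStrictDerivAt G (deriv G x) x := analyticAt_hasStrictDerivAt (hG x hx)
  set g := hGsd.localInverse G (deriv G x) x hd with hgdef
  have hev1 : ∀ᶠ y in 𝓝 x, g (G y) = y :=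
    (hGsd.hasStrictFDerivAt_equiv hd).eventually_left_inverse
  have hmap : Filter.map G (𝓝 x) = 𝓝 (G x) := hGsd.map_nhds_eq hd
  have hginv : HasStrictDerivAt g (deriv G x)⁻¹ (G x) := hGsd.to_localInverse hd
  have hgval : g (G x) = x := (hGsd.hasStrictFDerivAt_equiv hd).localInverse_apply_image
  have heq : (F ∘ Function.invFunOn G Ω) =ᶠ[𝓝 (G x)] (F ∘ g) := by
    rw [← hmap, Filter.eventuallyEq_iff_exists_mem]
    refine ⟨G '' {y | y ∈ Ω ∧ g (G y) = y}, ?_, ?_⟩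
    · rw [Filter.mem_map]
      filter_upwards [hΩ.mem_nhds hx, hev1] with y hy1 hy2
      exact ⟨y, ⟨hy1, hy2⟩, rfl⟩
    · rintro w ⟨y, ⟨hy1, hy2⟩, rfl⟩
      have : Function.invFunOn G Ω (G y) = y := hGinj.leftInvOn_invFunOn hy1
      simp [Function.comp, this, hy2]
  have hFg : DifferentiableAt ℂ (F ∘ g) (G x) := by
    apply DifferentiableAt.comp
    · rw [hgval]; exact (hF x hx).differentiableAt
    · exact hginv.hasDerivAt.differentiableAt
  exact heq.differentiableAt_iff.mpr hFg

lemma nhds_le_map_of_injOn {Ω : Set ℂ} (hΩ : IsOpen Ω) {G : ℂ → ℂ}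
    (hG : AnalyticOnNhd ℂ G Ω) (hGinj : Set.InjOn G Ω) {z₀ : ℂ} (hz₀ : z₀ ∈ Ω) :
    𝓝 (G z₀) ≤ Filter.map G (𝓝 z₀) := by
  refine ((hG z₀ hz₀).eventually_constant_or_nhds_le_map_nhds).resolve_left ?_
  intro hconst
  obtain ⟨ε, hε, hball⟩ := Metric.eventually_nhds_iff_ball.mp (hconst.and (hΩ.eventually_mem hz₀))
  set z₁ : ℂ := z₀ + (ε/2 : ℝ)
  have hz₁ : z₁ ∈ ball z₀ ε := by
    have hd12 : dist z₁ z₀ = ε/2 := by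
      simp only [z₁, dist_eq_norm, add_sub_cancel_left, Complex.norm_real, Real.norm_eq_abs]
      exact abs_of_pos (by linarith)
    rw [mem_ball, hd12]; linarith
  have hne : z₁ ≠ z₀ := by
    simp only [z₁, ne_eq, add_eq_left]
    exact_mod_cast (by positivity : (ε/2 : ℝ) ≠ 0) ∘ (by exact_mod_cast ·)
  exact hne (hGinj (hball z₁ hz₁).2 hz₀ (hball z₁ hz₁).1)

lemma continuousAt_invFunOn {Ω : Set ℂ} (hΩ : IsOpen Ω) {G : ℂ → ℂ}
    (hG : AnalyticOnNhd ℂ G Ω) (hGinj : Set.InjOn G Ω) {z₀ : ℂ} (hz₀ : z₀ ∈ Ω) :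
    Filter.Tendsto (Function.invFunOn G Ω) (𝓝 (G z₀)) (𝓝 z₀) := by
  have hmap := nhds_le_map_of_injOn hΩ hG hGinj hz₀
  intro s hs
  rw [Filter.mem_map]
  apply hmap
  rw [Filter.mem_map]
  filter_upwards [Filter.inter_mem hs (hΩ.mem_nhds hz₀)] with y ⟨hy1, hy2⟩
  have : Function.invFunOn G Ω (G y) = y := hGinj.leftInvOn_invFunOn hy2
  simpa [this] using hy1

/-- Main differentiability lemma. -/
lemma diffAt_comp_invFunOn {Ω : Set ℂ} (hΩ : IsOpen Ω) {F G : ℂ → ℂ}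
    (hF : AnalyticOnNhd ℂ F Ω) (hG : AnalyticOnNhd ℂ G Ω) (hGinj : Set.InjOn G Ω)
    {w₀ : ℂ} (hw₀ : w₀ ∈ G '' Ω) :
    DifferentiableAt ℂ (F ∘ Function.invFunOn G Ω) w₀ := by
  obtain ⟨z₀, hz₀, rfl⟩ := hw₀
  by_cases hd : deriv G z₀ ≠ 0
  · exact diffAt_comp_invFunOn_of_deriv_ne hΩ hF hG hGinj hz₀ hd
  push_neg at hd
  have hmap := nhds_le_map_of_injOn hΩ hG hGinj hz₀
  -- continuity of φ at G z₀
  have hinv : Function.invFunOn G Ω (G z₀) = z₀ := hGinj.leftInvOn_invFunOn hz₀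
  have hc : ContinuousAt (F ∘ Function.invFunOn G Ω) (G z₀) := by
    apply ContinuousAt.comp
    · rw [hinv]; exact (hF z₀ hz₀).continuousAt
    · rw [ContinuousAt, hinv]
      exact continuousAt_invFunOn hΩ hG hGinj hz₀
  -- derivative of G is analytic, not identically zero
  have hderivAn : AnalyticAt ℂ (deriv G) z₀ := (hG.deriv_of_isOpen hΩ) z₀ hz₀
  rcases hderivAn.eventually_eq_zero_or_eventually_ne_zero with hzero | hne
  · -- G would be constant near z₀, contradicting injectivity
    exfalso
    obtain ⟨ε, hε, hball⟩ := Metric.eventually_nhds_iff_ball.mp (hzero.and (hΩ.eventually_mem hz₀))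
    have hconst : ∀ y ∈ ball z₀ ε, G y = G z₀ := by
      intro y hy
      apply Convex.is_const_of_fderivWithin_eq_zero (convex_ball z₀ ε)
        (fun t ht => ((hG t (hball t ht).2).differentiableAt).differentiableWithinAt)
        ?_ hy (mem_ball_self hε)
      intro t ht
      rw [fderivWithin_of_isOpen isOpen_ball ht]
      apply ContinuousLinearMap.ext_ring
      have h1 : fderiv ℂ G t 1 = deriv G t := rfl
      simp [h1, (hball t ht).1]
    set z₁ : ℂ := z₀ + (ε/2 : ℝ)
    have hz₁ : z₁ ∈ ball z₀ ε := by
      have hd12 : dist z₁ z₀ = ε/2 := by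
        simp only [z₁, dist_eq_norm, add_sub_cancel_left, Complex.norm_real, Real.norm_eq_abs]
        exact abs_of_pos (by linarith)
      rw [mem_ball, hd12]; linarith
    have hne : z₁ ≠ z₀ := by
      simp only [z₁, ne_eq, add_eq_left]
      exact_mod_cast (by positivity : (ε/2 : ℝ) ≠ 0) ∘ (by exact_mod_cast ·)
    exact hne (hGinj (hball z₁ hz₁).2 hz₀ (hconst z₁ hz₁))
  · -- removable singularity
    have hpunct : ∀ᶠ w in 𝓝[≠] (G z₀), DifferentiableAt ℂ (F ∘ Function.invFunOn G Ω) w := by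
      have hset : ∀ᶠ z in 𝓝 z₀, z ∈ Ω ∧ (z ≠ z₀ → deriv G z ≠ 0) := by
        filter_upwards [hΩ.eventually_mem hz₀, eventually_nhdsWithin_iff.mp hne] with z h1 h2
        exact ⟨h1, h2⟩
      have himg : ∀ᶠ w in 𝓝 (G z₀), w ∈ G '' {z | z ∈ Ω ∧ (z ≠ z₀ → deriv G z ≠ 0)} := by
        apply hmap
        rw [Filter.mem_map]
        filter_upwards [hset] with z hz using ⟨z, hz, rfl⟩
      rw [eventually_nhdsWithin_iff]
      filter_upwards [himg] with w hw hwne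
      obtain ⟨x, ⟨hxΩ, hximp⟩, rfl⟩ := hw
      have hxne : x ≠ z₀ := fun h => hwne (by rw [h]; exact Set.mem_singleton _)
      exact diffAt_comp_invFunOn_of_deriv_ne hΩ hF hG hGinj hxΩ (hximp hxne)
    exact (Complex.analyticAt_of_differentiable_on_punctured_nhds_of_continuousAt
      hpunct hc).differentiableAt

/-- Uniqueness of normalized conformal maps onto UHP. -/
lemma eqOn_of_normalized {Ω : Set ℂ} (hΩ : IsOpen Ω) {F G : ℂ → ℂ}
    (hFan : AnalyticOnNhd ℂ F Ω) (hGan : AnalyticOnNhd ℂ G Ω)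
    (hFinj : Set.InjOn F Ω) (hGinj : Set.InjOn G Ω)
    (hFim : F '' Ω = UHP) (hGim : G '' Ω = UHP)
    {z : ℕ → ℂ} (hzΩ : ∀ n, z n ∈ Ω)
    (hdiff : Filter.Tendsto (fun n => F (z n) - G (z n)) Filter.atTop (𝓝 0))
    (hGinf : Filter.Tendsto (fun n => ‖G (z n)‖) Filter.atTop Filter.atTop) :
    Set.EqOn F G Ω := by
  set φ := F ∘ Function.invFunOn G Ω with hφdef
  set ψ := G ∘ Function.invFunOn F Ω with hψdef
  have hφG : ∀ x ∈ Ω, φ (G x) = F x := fun x hx => by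
    simp only [hφdef, Function.comp_apply, hGinj.leftInvOn_invFunOn hx]
  have hψF : ∀ x ∈ Ω, ψ (F x) = G x := fun x hx => by
    simp only [hψdef, Function.comp_apply, hFinj.leftInvOn_invFunOn hx]
  have hφmem : ∀ w ∈ UHP, φ w ∈ UHP := by
    intro w hw
    rw [← hGim] at hw
    obtain ⟨x, hx, rfl⟩ := hw
    rw [hφG x hx, ← hFim]
    exact Set.mem_image_of_mem _ hx
  have hψmem : ∀ w ∈ UHP, ψ w ∈ UHP := by
    intro w hw
    rw [← hFim] at hw
    obtain ⟨x, hx, rfl⟩ := hw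
    rw [hψF x hx, ← hGim]
    exact Set.mem_image_of_mem _ hx
  have hψφ : ∀ w ∈ UHP, ψ (φ w) = w := by
    intro w hw
    rw [← hGim] at hw
    obtain ⟨x, hx, rfl⟩ := hw
    rw [hφG x hx, hψF x hx]
  have hφdiff : ∀ w ∈ UHP, DifferentiableAt ℂ φ w := fun w hw =>
    diffAt_comp_invFunOn hΩ hFan hGan hGinj (hGim ▸ hw)
  have hψdiff : ∀ w ∈ UHP, DifferentiableAt ℂ ψ w := fun w hw =>
    diffAt_comp_invFunOn hΩ hGan hFan hFinj (hFim ▸ hw)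
  set w₀ := G (z 0) with hw₀def
  set w₀' := F (z 0) with hw₀'def
  have hw₀U : w₀ ∈ UHP := hGim ▸ Set.mem_image_of_mem G (hzΩ 0)
  have hw₀'U : w₀' ∈ UHP := hFim ▸ Set.mem_image_of_mem F (hzΩ 0)
  have hw₀ : 0 < w₀.im := hw₀U
  have hw₀' : 0 < w₀'.im := hw₀'U
  have hφw₀ : φ w₀ = w₀' := hφG (z 0) (hzΩ 0)
  set f := fun ζ => cayleyT w₀' (φ (cayleyS w₀ ζ)) with hfdef
  set g := fun ζ => cayleyT w₀ (ψ (cayleyS w₀' ζ)) with hgdef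
  have hball_ne : ∀ ζ ∈ ball (0:ℂ) 1, (1:ℂ) - ζ ≠ 0 := by
    intro ζ hζ hc
    have : ζ = 1 := by linear_combination -hc
    rw [this, mem_ball_zero_iff] at hζ
    simp at hζ
  have hfdiff : DifferentiableOn ℂ f (ball (0:ℂ) 1) := by
    intro ζ hζ
    apply DifferentiableAt.differentiableWithinAt
    have h1 : (cayleyS w₀ ζ) ∈ UHP := cayleyS_mem hw₀ hζ
    have h2 : φ (cayleyS w₀ ζ) ∈ UHP := hφmem _ h1
    exact ((cayleyT_differentiableAt hw₀' h2).comp _ (hφdiff _ h1)).comp _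
      (cayleyS_differentiableAt (hball_ne ζ hζ))
  have hgdiff : DifferentiableOn ℂ g (ball (0:ℂ) 1) := by
    intro ζ hζ
    apply DifferentiableAt.differentiableWithinAt
    have h1 : (cayleyS w₀' ζ) ∈ UHP := cayleyS_mem hw₀' hζ
    have h2 : ψ (cayleyS w₀' ζ) ∈ UHP := hψmem _ h1
    exact ((cayleyT_differentiableAt hw₀ h2).comp _ (hψdiff _ h1)).comp _
      (cayleyS_differentiableAt (hball_ne ζ hζ))
  have hfmaps : Set.MapsTo f (ball (0:ℂ) 1) (ball (0:ℂ) 1) := fun ζ hζ =>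
    cayleyT_mem hw₀' (hφmem _ (cayleyS_mem hw₀ hζ))
  have hgmaps : Set.MapsTo g (ball (0:ℂ) 1) (ball (0:ℂ) 1) := fun ζ hζ =>
    cayleyT_mem hw₀ (hψmem _ (cayleyS_mem hw₀' hζ))
  have hf0 : f 0 = 0 := by
    simp only [hfdef, cayleyS_zero, hφw₀, cayleyT, sub_self, mul_zero]
  have hg0 : g 0 = 0 := by
    have hψw₀' : ψ w₀' = w₀ := hψF (z 0) (hzΩ 0)
    simp only [hgdef, cayleyS_zero, hψw₀', cayleyT, sub_self, mul_zero]
  have hgf : Set.EqOn (g ∘ f) id (ball (0:ℂ) 1) := by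
    intro ζ hζ
    have h1 : (cayleyS w₀ ζ) ∈ UHP := cayleyS_mem hw₀ hζ
    have h2 : φ (cayleyS w₀ ζ) ∈ UHP := hφmem _ h1
    simp only [Function.comp_apply, hgdef, hfdef, id_eq]
    rw [cayleyS_cayleyT hw₀' h2, hψφ _ h1, cayleyT_cayleyS hw₀ hζ]
  have hmem0 : (0:ℂ) ∈ ball (0:ℂ) 1 := mem_ball_self one_pos
  have hdf : DifferentiableAt ℂ f 0 := hfdiff.differentiableAt (isOpen_ball.mem_nhds hmem0)
  have hdg : DifferentiableAt ℂ g 0 :=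
    hgdiff.differentiableAt (isOpen_ball.mem_nhds (hf0 ▸ hmem0))
  have hcomp : deriv (g ∘ f) 0 = deriv g (f 0) * deriv f 0 :=
    deriv_comp (x := 0) (by rw [hf0]; exact hdg) hdf
  have hderiv_one : deriv g 0 * deriv f 0 = 1 := by
    have hev : (g ∘ f) =ᶠ[𝓝 (0:ℂ)] id :=
      Filter.eventuallyEq_of_mem (isOpen_ball.mem_nhds hmem0) hgf
    have h1 : deriv (g ∘ f) 0 = 1 := by rw [hev.deriv_eq]; exact deriv_id 0
    calc deriv g 0 * deriv f 0 = deriv g (f 0) * deriv f 0 := by rw [hf0]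
      _ = deriv (g ∘ f) 0 := hcomp.symm
      _ = 1 := h1
  -- Schwarz lemma part
  have habsf : ‖deriv f 0‖ ≤ 1 :=
    Complex.norm_deriv_le_one_of_mapsTo_ball hfdiff (by rw [hf0]; exact hfmaps.mono_right ball_subset_closedBall) one_pos
  have habsg : ‖deriv g 0‖ ≤ 1 :=
    Complex.norm_deriv_le_one_of_mapsTo_ball hgdiff (by rw [hg0]; exact hgmaps.mono_right ball_subset_closedBall) one_pos
  have habsmul : ‖deriv g 0‖ * ‖deriv f 0‖ = 1 := by
    rw [← norm_mul, hderiv_one, norm_one]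
  have habsf1 : ‖deriv f 0‖ = 1 := by
    refine le_antisymm habsf ?_
    nlinarith [norm_nonneg (deriv f 0), norm_nonneg (deriv g 0)]
  have hkey := Complex.affine_of_mapsTo_ball_of_exists_norm_dslope_eq_div hfdiff
      (by rw [hf0]; exact hfmaps.mono_right ball_subset_closedBall) hmem0
      (by rw [dslope_same]; simp [habsf1])
  set C := deriv f 0 with hCdef
  have hfform : ∀ ζ ∈ ball (0:ℂ) 1, f ζ = C * ζ := by
    intro ζ hζ
    have h1 := hkey hζ
    simp only [hf0, dslope_same, sub_zero, zero_add, smul_eq_mul] at h1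
    rw [h1, mul_comm]
  have hφform : ∀ w : ℂ, 0 < w.im → φ w = cayleyS w₀' (C * cayleyT w₀ w) := by
    intro w hw
    have hζ : cayleyT w₀ w ∈ ball (0:ℂ) 1 := cayleyT_mem hw₀ hw
    have h1 := hfform _ hζ
    simp only [hfdef] at h1
    rw [cayleyS_cayleyT hw₀ hw] at h1
    have h2 : φ w ∈ UHP := hφmem w hw
    rw [← h1, cayleyS_cayleyT hw₀' h2]
  -- asymptotics of the Cayley transform along the sequence
  have hwim : ∀ n, 0 < (G (z n)).im := fun n =>
    (hGim ▸ Set.mem_image_of_mem G (hzΩ n) : G (z n) ∈ UHP)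
  have hTsub : ∀ n, cayleyT w₀ (G (z n)) - 1
      = ((starRingEnd ℂ) w₀ - w₀) * (G (z n) - (starRingEnd ℂ) w₀)⁻¹ := by
    intro n
    have hden := sub_conj_ne hw₀ (hwim n)
    rw [cayleyT]
    field_simp
    ring
  have hdenT : Filter.Tendsto (fun n => ‖G (z n) - (starRingEnd ℂ) w₀‖)
      Filter.atTop Filter.atTop := by
    apply Filter.tendsto_atTop_mono _
      (Filter.tendsto_atTop_add_const_right _ (-(‖w₀‖)) hGinf)
    intro n
    have h1 : ‖G (z n)‖ - ‖(starRingEnd ℂ) w₀‖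
        ≤ ‖G (z n) - (starRingEnd ℂ) w₀‖ := by
      simpa using norm_sub_norm_le (G (z n)) ((starRingEnd ℂ) w₀)
    simpa [Complex.norm_conj, sub_eq_add_neg] using h1
  have hT1 : Filter.Tendsto (fun n => cayleyT w₀ (G (z n))) Filter.atTop (𝓝 1) := by
    rw [← tendsto_sub_nhds_zero_iff, tendsto_zero_iff_norm_tendsto_zero]
    have heqn : ∀ n, ‖cayleyT w₀ (G (z n)) - 1‖
        = ‖(starRingEnd ℂ) w₀ - w₀‖ * (‖G (z n) - (starRingEnd ℂ) w₀‖)⁻¹ := by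
      intro n
      rw [hTsub n]
      simp [norm_mul, norm_inv]
    simp only [heqn]
    simpa using (hdenT.inv_tendsto_atTop).const_mul (‖(starRingEnd ℂ) w₀ - w₀‖)
  have habsd : Filter.Tendsto (fun n => ‖F (z n) - G (z n)‖)
      Filter.atTop (𝓝 0) := by
    simpa using tendsto_zero_iff_norm_tendsto_zero.mp hdiff
  have hFinf : Filter.Tendsto (fun n => ‖F (z n)‖) Filter.atTop Filter.atTop := by
    have hev : ∀ᶠ n in Filter.atTop,
        ‖G (z n)‖ + (-1) ≤ ‖F (z n)‖ := by
      filter_upwards [habsd.eventually (gt_mem_nhds one_pos)] with n hn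
      have h2 : ‖G (z n)‖ ≤ ‖F (z n)‖ + ‖F (z n) - G (z n)‖ := by
        calc ‖G (z n)‖ = ‖F (z n) - (F (z n) - G (z n))‖ := by ring_nf
          _ ≤ _ := by
            simpa using norm_sub_le (F (z n)) (F (z n) - G (z n))
      linarith
    exact Filter.tendsto_atTop_mono' _ hev
      (Filter.tendsto_atTop_add_const_right _ (-1) hGinf)
  -- C = 1
  have hC1 : C = 1 := by
    by_contra hCne
    have h1C : (1:ℂ) - C ≠ 0 := sub_ne_zero.mpr (fun h => hCne h.symm)
    have hScont : ContinuousAt (cayleyS w₀') C := (cayleyS_differentiableAt h1C).continuousAt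
    have hCT : Filter.Tendsto (fun n => C * cayleyT w₀ (G (z n))) Filter.atTop (𝓝 C) := by
      simpa using hT1.const_mul C
    have hFt : Filter.Tendsto (fun n => F (z n)) Filter.atTop (𝓝 (cayleyS w₀' C)) := by
      have h2 := hScont.tendsto.comp hCT
      have h3 : ∀ n, cayleyS w₀' (C * cayleyT w₀ (G (z n))) = F (z n) := by
        intro n
        rw [← hφform _ (hwim n), hφG _ (hzΩ n)]
      refine h2.congr fun n => ?_
      simp only [Function.comp_apply, h3]
    exact not_tendsto_atTop_of_tendsto_nhds ((continuous_norm.tendsto _).comp hFt) hFinf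
  -- φ is affine, hence the identity
  set a := (w₀ - (starRingEnd ℂ) w₀)⁻¹ * (w₀' - (starRingEnd ℂ) w₀') with hadef
  set b := (w₀ - (starRingEnd ℂ) w₀)⁻¹ * ((starRingEnd ℂ) w₀' * w₀ - w₀' * (starRingEnd ℂ) w₀)
    with hbdef
  have hform2 : ∀ w : ℂ, 0 < w.im → φ w = a * w + b := by
    intro w hw
    rw [hφform w hw, hC1, one_mul, cayley_affine hw₀ hw, hadef, hbdef]
    ring
  have hseq : Filter.Tendsto (fun n => (a - 1) * G (z n) + b) Filter.atTop (𝓝 0) := by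
    have h4 : ∀ n, (a - 1) * G (z n) + b = F (z n) - G (z n) := by
      intro n
      rw [← hφG _ (hzΩ n), hform2 _ (hwim n)]
      ring
    simp only [h4]
    exact hdiff
  have ha1 : a = 1 := by
    by_contra hane
    have hapos : 0 < ‖a - 1‖ := norm_pos_iff.mpr (sub_ne_zero.mpr hane)
    have hlow : Filter.Tendsto
        (fun n => ‖a-1‖ * ‖G (z n)‖ + (-(‖b‖)))
        Filter.atTop Filter.atTop :=
      Filter.tendsto_atTop_add_const_right _ _ (hGinf.const_mul_atTop hapos)
    have hmono : ∀ n, ‖a-1‖ * ‖G (z n)‖ + (-(‖b‖))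
        ≤ ‖(a - 1) * G (z n) + b‖ := by
      intro n
      have h5 : ‖(a-1) * G (z n)‖ - ‖-b‖
          ≤ ‖(a-1) * G (z n) - (-b)‖ := by
        simpa using norm_sub_norm_le ((a-1) * G (z n)) (-b)
      rw [norm_mul] at h5
      simp only [norm_neg, sub_neg_eq_add] at h5
      linarith
    have h6 := Filter.tendsto_atTop_mono hmono hlow
    exact not_tendsto_atTop_of_tendsto_nhds ((continuous_norm.tendsto _).comp hseq) h6
  have hb0 : b = 0 := by
    have h7 : Filter.Tendsto (fun _ : ℕ => b) Filter.atTop (𝓝 0) := by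
      have := hseq
      simp only [ha1, sub_self, zero_mul, zero_add] at this
      exact this
    exact tendsto_nhds_unique tendsto_const_nhds h7
  intro x hx
  have hGx : G x ∈ UHP := hGim ▸ Set.mem_image_of_mem G hx
  have h8 := hform2 (G x) hGx
  rw [hφG x hx, ha1, hb0] at h8
  rw [h8]
  ring

lemma isOpen_UHP : IsOpen UHP := IsOpen.preimage Complex.continuous_im isOpen_Ioi

lemma norm_bound_aux {φ : ℂ → ℂ} {H : Set ℂ} {c C R : ℝ}
    (hb : ∀ z ∈ UHP \ H, R ≤ ‖z‖ →
      ‖φ z - z - (c:ℂ)/z‖ ≤ C / ‖z‖ ^ 2)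
    (hC : 0 ≤ C) {z : ℂ} (hz : z ∈ UHP \ H) (hR : R ≤ ‖z‖)
    (h1 : 1 ≤ ‖z‖) :
    ‖φ z - z‖ ≤ (|c| + C) / ‖z‖ := by
  have h0 : 0 < ‖z‖ := lt_of_lt_of_le one_pos h1
  have h2 := hb z hz hR
  have h3 : ‖(c:ℂ)/z‖ = |c| / ‖z‖ := by
    rw [norm_div, Complex.norm_real, Real.norm_eq_abs]
  have h4 : ‖φ z - z‖ ≤ ‖φ z - z - (c:ℂ)/z‖ + ‖(c:ℂ)/z‖ := by
    have := norm_add_le (φ z - z - (c:ℂ)/z) ((c:ℂ)/z)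
    simpa using this
  have h5 : C / ‖z‖ ^ 2 ≤ C / ‖z‖ := by
    rw [pow_two, ← div_div]
    exact div_le_self (by positivity) h1
  rw [add_div, ← h3]
  linarith

/-- for hulls H₁ ⊆ H₂ ⊆ H₃, H₂/H₁ ⊆ H₃/H₁ and
(H₃/H₁)/(H₂/H₁) = H₃/H₂. -/
theorem stmt_2 (H1 H2 H3 : Set ℂ)
    (h1 : IsHull H1) (h2 : IsHull H2) (h3 : IsHull H3)
    (h12 : H1 ⊆ H2) (h23 : H2 ⊆ H3)
    (φ1 φ2 φ21 : ℂ → ℂ) (c1 c2 c21 : ℝ)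
    (hφ1 : IsLoewnerMap H1 φ1 c1) (hφ2 : IsLoewnerMap H2 φ2 c2)
    (hφ21 : IsLoewnerMap (φ1 '' (H2 \ H1)) φ21 c21) :
    φ1 '' (H2 \ H1) ⊆ φ1 '' (H3 \ H1) ∧
      φ21 '' (φ1 '' (H3 \ H1) \ φ1 '' (H2 \ H1)) = φ2 '' (H3 \ H2) := by
  obtain ⟨⟨hφ1an, hφ1inj, hφ1im⟩, C₁, R₁, hC₁, hb₁⟩ := hφ1
  obtain ⟨⟨hφ2an, hφ2inj, hφ2im⟩, C₂, R₂, hC₂, hb₂⟩ := hφ2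
  obtain ⟨⟨hφ21an, hφ21inj, hφ21im⟩, C₂₁, R₂₁, hC₂₁, hb₂₁⟩ := hφ21
  obtain ⟨hH2U, hH2b, hH2cl, -⟩ := h2
  obtain ⟨hH3U, hH3b, hH3cl, -⟩ := h3
  refine ⟨Set.image_mono (Set.diff_subset_diff_left h23), ?_⟩
  -- the open set Ω = UHP \ H2
  have hΩopen : IsOpen (UHP \ H2) := by
    have hE : UHP \ H2 = UHP ∩ (closure H2)ᶜ := by
      ext w
      constructor
      · rintro ⟨hw1, hw2⟩
        exact ⟨hw1, fun hc => hw2 (hH2cl w hc hw1)⟩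
      · rintro ⟨hw1, hw2⟩
        exact ⟨hw1, fun hc => hw2 (subset_closure hc)⟩
    rw [hE]
    exact isOpen_UHP.inter isClosed_closure.isOpen_compl
  have hsub21 : H2 \ H1 ⊆ UHP \ H1 := fun x hx => ⟨hH2U hx.1, hx.2⟩
  have hΩsub1 : UHP \ H2 ⊆ UHP \ H1 := fun x hx => ⟨hx.1, fun h => hx.2 (h12 h)⟩
  set G := φ21 ∘ φ1 with hGdef
  have hφ1memΩ : ∀ x ∈ UHP \ H2, φ1 x ∈ UHP \ φ1 '' (H2 \ H1) := by
    intro x hx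
    constructor
    · rw [← hφ1im]
      exact Set.mem_image_of_mem _ (hΩsub1 hx)
    · rintro ⟨y, hy, heq⟩
      have hxy := hφ1inj (hsub21 hy) (hΩsub1 hx) heq
      exact hx.2 (hxy ▸ hy.1)
  have hGan : AnalyticOnNhd ℂ G (UHP \ H2) := fun x hx =>
    (hφ21an _ (hφ1memΩ x hx)).comp (hφ1an _ (hΩsub1 hx))
  have hGinj : Set.InjOn G (UHP \ H2) := by
    intro x hx y hy h
    exact hφ1inj (hΩsub1 hx) (hΩsub1 hy) (hφ21inj (hφ1memΩ _ hx) (hφ1memΩ _ hy) h)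
  have himΩ : φ1 '' (UHP \ H2) = UHP \ φ1 '' (H2 \ H1) := by
    apply subset_antisymm
    · rintro _ ⟨x, hx, rfl⟩
      exact hφ1memΩ x hx
    · rintro w ⟨hw1, hw2⟩
      rw [← hφ1im] at hw1
      obtain ⟨x, hx, rfl⟩ := hw1
      refine ⟨x, ⟨hx.1, fun hx2 => hw2 ?_⟩, rfl⟩
      exact Set.mem_image_of_mem _ ⟨hx2, hx.2⟩
  have hGim : G '' (UHP \ H2) = UHP := by
    rw [hGdef, Set.image_comp, himΩ, hφ21im]
  -- the sequence going to infinity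
  obtain ⟨M, hM⟩ := hH2b.subset_ball 0
  set K₁ := |c1| + C₁ with hK₁def
  set K₂ := |c2| + C₂ with hK₂def
  set K₂₁ := |c21| + C₂₁ with hK₂₁def
  have hK₁0 : 0 ≤ K₁ := by positivity
  have hK₂0 : 0 ≤ K₂ := by positivity
  have hK₂₁0 : 0 ≤ K₂₁ := by positivity
  obtain ⟨N, hN2, hNK₁, hNR₁, hNR₂, hNR₂₁, hNM⟩ :
      ∃ N : ℝ, 2 ≤ N ∧ 2*K₁ ≤ N ∧ R₁ ≤ N ∧ R₂ ≤ N ∧ 2*R₂₁ ≤ N ∧ M + 1 ≤ N := by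
    refine ⟨2 + 2*|K₁| + |R₁| + |R₂| + 2*|R₂₁| + (|M| + 1), ?_, ?_, ?_, ?_, ?_, ?_⟩ <;>
      linarith [le_abs_self K₁, le_abs_self R₁, le_abs_self R₂, le_abs_self R₂₁, le_abs_self M,
        abs_nonneg K₁, abs_nonneg R₁, abs_nonneg R₂, abs_nonneg R₂₁, abs_nonneg M]
  set zs : ℕ → ℂ := fun n => ((N + n : ℝ) : ℂ) * Complex.I with hzsdef
  have hy : ∀ n : ℕ, (N:ℝ) ≤ N + n := fun n => by
    have : (0:ℝ) ≤ n := Nat.cast_nonneg n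
    linarith
  have hy0 : ∀ n : ℕ, (0:ℝ) < N + n := fun n => by linarith [hy n, hN2]
  have hzabs : ∀ n : ℕ, ‖zs n‖ = N + n := by
    intro n
    rw [hzsdef]
    simp only [norm_mul, Complex.norm_I, Complex.norm_real, mul_one]
    exact abs_of_pos (hy0 n)
  have hzim : ∀ n : ℕ, (zs n).im = N + n := by
    intro n
    simp [hzsdef, Complex.mul_im]
  have hzsΩ : ∀ n, zs n ∈ UHP \ H2 := by
    intro n
    constructor
    · show 0 < (zs n).im
      rw [hzim n]; exact hy0 n
    · intro hmem
      have h5 := hM hmem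
      rw [mem_ball, dist_zero_right, hzabs n] at h5
      linarith [hy n]
  have hzs1 : ∀ n, zs n ∈ UHP \ H1 := fun n => hΩsub1 (hzsΩ n)
  -- bound for φ1
  have hbd1 : ∀ n, ‖φ1 (zs n) - zs n‖ ≤ K₁ / (N + n) := by
    intro n
    rw [← hzabs n]
    apply norm_bound_aux hb₁ (le_of_lt hC₁) (hzs1 n)
    · rw [hzabs n]; linarith [hy n]
    · rw [hzabs n]; linarith [hy n]
  -- bound for φ2
  have hbd2 : ∀ n, ‖φ2 (zs n) - zs n‖ ≤ K₂ / (N + n) := by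
    intro n
    rw [← hzabs n]
    apply norm_bound_aux hb₂ (le_of_lt hC₂) (hzsΩ n)
    · rw [hzabs n]; linarith [hy n]
    · rw [hzabs n]; linarith [hy n]
  -- K₁/(N+n) ≤ K₁ etc
  have hK₁y : ∀ n : ℕ, K₁ / (N + n) ≤ K₁ := fun n =>
    div_le_self hK₁0 (by linarith [hy n])
  -- abs of φ1 (zs n) is large
  have habsw : ∀ n : ℕ, (N + n) - K₁ ≤ ‖φ1 (zs n)‖ := by
    intro n
    have h5 : ‖zs n‖ - ‖φ1 (zs n) - zs n‖ ≤ ‖φ1 (zs n)‖ := by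
      have h6 := norm_sub_norm_le (zs n) (zs n - φ1 (zs n))
      rw [sub_sub_cancel] at h6
      rw [norm_sub_rev (φ1 (zs n)) (zs n)]
      exact h6
    rw [hzabs n] at h5
    have := hK₁y n
    linarith [hbd1 n]
  have habswhalf : ∀ n : ℕ, (N + n)/2 ≤ ‖φ1 (zs n)‖ := by
    intro n
    have h6 := habsw n
    linarith [hy n]
  -- bound for φ21 at φ1 (zs n)
  have hbd21 : ∀ n : ℕ, ‖φ21 (φ1 (zs n)) - φ1 (zs n)‖ ≤ 2*K₂₁ / (N + n) := by
    intro n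
    have hwmem := hφ1memΩ _ (hzsΩ n)
    have hwabs : R₂₁ ≤ ‖φ1 (zs n)‖ := by
      have h8 := habswhalf n
      linarith [hy n]
    have hw1 : 1 ≤ ‖φ1 (zs n)‖ := by
      have h8 := habswhalf n
      linarith [hy n]
    have h10 := norm_bound_aux hb₂₁ (le_of_lt hC₂₁) hwmem hwabs hw1
    calc ‖φ21 (φ1 (zs n)) - φ1 (zs n)‖ ≤ K₂₁ / ‖φ1 (zs n)‖ := h10
      _ ≤ 2*K₂₁ / (N + n) := by
          rw [div_le_div_iff₀ (by linarith [habswhalf n, hy0 n]) (hy0 n)]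
          nlinarith [habswhalf n, hy0 n, hK₂₁0]
  -- combined bounds
  have hbdG : ∀ n : ℕ, ‖G (zs n) - zs n‖ ≤ (K₁ + 2*K₂₁) / (N + n) := by
    intro n
    have h11 : G (zs n) - zs n = (φ21 (φ1 (zs n)) - φ1 (zs n)) + (φ1 (zs n) - zs n) := by
      simp only [hGdef, Function.comp_apply]
      ring
    rw [h11]
    calc ‖_‖ ≤ ‖φ21 (φ1 (zs n)) - φ1 (zs n)‖
          + ‖φ1 (zs n) - zs n‖ := norm_add_le _ _
      _ ≤ 2*K₂₁ / (N + n) + K₁ / (N + n) := add_le_add (hbd21 n) (hbd1 n)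
      _ = (K₁ + 2*K₂₁) / (N + n) := by ring
  have hbdFG : ∀ n : ℕ, ‖φ2 (zs n) - G (zs n)‖ ≤ (K₂ + K₁ + 2*K₂₁) / (N + n) := by
    intro n
    have h11 : φ2 (zs n) - G (zs n) = (φ2 (zs n) - zs n) - (G (zs n) - zs n) := by ring
    rw [h11]
    calc ‖_‖ ≤ ‖φ2 (zs n) - zs n‖ + ‖G (zs n) - zs n‖ := by
          have h13 := norm_add_le (φ2 (zs n) - zs n) (zs n - G (zs n))
          rw [sub_add_sub_cancel, norm_sub_rev (zs n) (G (zs n))] at h13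
          rw [sub_sub_sub_cancel_right]
          exact h13
      _ ≤ K₂ / (N + n) + (K₁ + 2*K₂₁) / (N + n) := add_le_add (hbd2 n) (hbdG n)
      _ = (K₂ + K₁ + 2*K₂₁) / (N + n) := by ring
  have htendy : Filter.Tendsto (fun n : ℕ => (N + n : ℝ)) Filter.atTop Filter.atTop :=
    tendsto_atTop_add_const_left _ _ tendsto_natCast_atTop_atTop
  have hdiff : Filter.Tendsto (fun n => φ2 (zs n) - G (zs n)) Filter.atTop (𝓝 0) := by
    rw [tendsto_zero_iff_norm_tendsto_zero]
    apply squeeze_zero (fun n => norm_nonneg _) (fun n => by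
      simpa using hbdFG n)
    simpa using (tendsto_const_nhds (x := (K₂ + K₁ + 2*K₂₁))).div_atTop htendy
  have hGinf : Filter.Tendsto (fun n => ‖G (zs n)‖) Filter.atTop Filter.atTop := by
    apply Filter.tendsto_atTop_mono' _ _
      (Filter.tendsto_atTop_add_const_right _ (-(K₁ + 2*K₂₁)) htendy)
    filter_upwards with n
    have h12 : ‖zs n‖ - ‖G (zs n) - zs n‖ ≤ ‖G (zs n)‖ := by
      have h6 := norm_sub_norm_le (zs n) (zs n - G (zs n))
      rw [sub_sub_cancel] at h6
      rw [norm_sub_rev (G (zs n)) (zs n)]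
      exact h6
    rw [hzabs n] at h12
    have h13 : ‖G (zs n) - zs n‖ ≤ K₁ + 2*K₂₁ := by
      calc ‖G (zs n) - zs n‖ ≤ (K₁ + 2*K₂₁) / (N + n) := hbdG n
        _ ≤ K₁ + 2*K₂₁ := div_le_self (by positivity) (by linarith [hy n])
    linarith
  -- the uniqueness theorem
  have hEq : Set.EqOn φ2 G (UHP \ H2) :=
    eqOn_of_normalized hΩopen hφ2an hGan hφ2inj hGinj hφ2im hGim hzsΩ hdiff hGinf
  -- final set computation
  have himdiff : φ1 '' (H3 \ H1) \ φ1 '' (H2 \ H1) = φ1 '' (H3 \ H2) := by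
    apply subset_antisymm
    · rintro w ⟨⟨x, hx, rfl⟩, hw2⟩
      refine ⟨x, ⟨hx.1, fun hx2 => hw2 ?_⟩, rfl⟩
      exact Set.mem_image_of_mem _ ⟨hx2, hx.2⟩
    · rintro _ ⟨x, hx, rfl⟩
      have hxU : x ∈ UHP \ H1 := ⟨hH3U hx.1, fun h => hx.2 (h12 h)⟩
      refine ⟨⟨x, ⟨hx.1, hxU.2⟩, rfl⟩, ?_⟩
      rintro ⟨y, hy', heq⟩
      have hxy := hφ1inj (hsub21 hy') hxU heq
      exact hx.2 (hxy ▸ hy'.1)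
  have hsubΩ : H3 \ H2 ⊆ UHP \ H2 := fun x hx => ⟨hH3U hx.1, hx.2⟩
  calc φ21 '' (φ1 '' (H3 \ H1) \ φ1 '' (H2 \ H1)) = φ21 '' (φ1 '' (H3 \ H2)) := by rw [himdiff]
    _ = G '' (H3 \ H2) := (Set.image_comp _ _ _).symm
    _ = φ2 '' (H3 \ H2) := ((hEq.mono hsubΩ).image_eq).symm
end
end

section
/- Let H be a nonempty hull in ℍ w.r.t. ∞, and let Σ_H* = ℂ \ (H ∪ {z̄ : z ∈ H} ∪ Q_H) where Q_H = H̄ ∩ ℝ. There exists a constant M_H > 0 such that |φ_K(z) − z| ≤ M_H for every hull K ⊂ H and every z ∈ Σ_H* (after extending φ_K to Σ_H* by Schwarz reflection). -/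
open Complex Set Bornology Filter MeasureTheory Metric

noncomputable section

theorem Complex.abs.add_le (a b : ℂ) : ‖a + b‖ ≤ ‖a‖ + ‖b‖ := norm_add_le a b
theorem Complex.abs.pos {z : ℂ} (h : z ≠ 0) : 0 < ‖z‖ := norm_pos_iff.mpr h
theorem Complex.abs.nonneg (z : ℂ) : 0 ≤ ‖z‖ := norm_nonneg z
theorem Complex.abs.map_neg (z : ℂ) : ‖-z‖ = ‖z‖ := norm_neg z
theorem Complex.abs_I : ‖Complex.I‖ = 1 := Complex.norm_I
theorem Complex.abs_two : ‖(2 : ℂ)‖ = 2 := Complex.norm_two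
theorem Complex.abs_conj (z : ℂ) : ‖(starRingEnd ℂ) z‖ = ‖z‖ := Complex.norm_conj z
theorem Complex.abs_exp (z : ℂ) : ‖Complex.exp z‖ = Real.exp z.re := Complex.norm_exp z
theorem Complex.abs_im_le_abs (z : ℂ) : |z.im| ≤ ‖z‖ := Complex.abs_im_le_norm z
theorem Complex.abs_mul_exp_arg_mul_I (x : ℂ) : (‖x‖ : ℂ) * Complex.exp (Complex.arg x * Complex.I) = x :=
  Complex.norm_mul_exp_arg_mul_I x
theorem Complex.abs_ofReal (r : ℝ) : ‖(r : ℂ)‖ = |r| := Complex.norm_real r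
theorem Complex.continuous_abs : Continuous (fun z : ℂ => ‖z‖) := continuous_norm
theorem Complex.sq_abs (z : ℂ) : ‖z‖ ^ 2 = Complex.normSq z := Complex.sq_norm z
theorem Complex.abs_apply (z : ℂ) : ‖z‖ = Real.sqrt (Complex.normSq z) := Complex.norm_def z
theorem Complex.norm_eq_abs (z : ℂ) : ‖z‖ = ‖z‖ := rfl

namespace Stmt6

structure Ctx (K : Set ℂ) (φ : ℂ → ℂ) (c R : ℝ) : Prop where
  hK : IsHull K
  hφ : IsExtendedLoewnerMap K φ c
  hR1 : 1 ≤ R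
  hKR : closure K ⊆ Metric.ball (0:ℂ) R

variable {K : Set ℂ} {φ : ℂ → ℂ} {c R : ℝ}

namespace Ctx
lemma analytic (hc : Ctx K φ c R) : AnalyticOnNhd ℂ φ (SigmaStar K) := hc.hφ.2.1
lemma inj (hc : Ctx K φ c R) : Set.InjOn φ (UHP \ K) := hc.hφ.1.1.2.1
lemma image (hc : Ctx K φ c R) : φ '' (UHP \ K) = UHP := hc.hφ.1.1.2.2
lemma symm (hc : Ctx K φ c R) : ∀ z ∈ SigmaStar K, φ ((starRingEnd ℂ) z) = (starRingEnd ℂ) (φ z) := hc.hφ.2.2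
lemma norm' (hc : Ctx K φ c R) : NormalizedAtInf φ K c := hc.hφ.1.2
end Ctx

lemma conj_image_eq_preimage (S : Set ℂ) :
    (starRingEnd ℂ) '' S = (starRingEnd ℂ) ⁻¹' S := by
  exact congrFun (Set.image_eq_preimage_of_inverse
    (fun z => Complex.conj_conj z) (fun z => Complex.conj_conj z)) S

lemma continuous_conj' : Continuous (starRingEnd ℂ) := by
  have : (starRingEnd ℂ) = fun z : ℂ => star z := by
    funext z; rw [starRingEnd_apply]
  rw [this]; exact continuous_star

lemma closure_im_nonneg (hK : IsHull K) {z : ℂ} (hz : z ∈ closure K) : 0 ≤ z.im := by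
  have : closure K ⊆ {z : ℂ | 0 ≤ z.im} := by
    apply closure_minimal
    · exact fun w hw => le_of_lt (show 0 < w.im from hK.1 hw)
    · exact isClosed_le continuous_const Complex.continuous_im
  exact this hz

lemma bad_eq (hK : IsHull K) :
    K ∪ (starRingEnd ℂ) '' K ∪ {z : ℂ | z.im = 0 ∧ z ∈ closure K} =
      closure K ∪ (starRingEnd ℂ) '' (closure K) := by
  apply Set.Subset.antisymm
  · refine Set.union_subset (Set.union_subset ?_ ?_) ?_
    · exact subset_closure.trans subset_union_left
    · exact (Set.image_mono subset_closure).trans subset_union_right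
    · exact fun z hz => Or.inl hz.2
  · refine Set.union_subset ?_ ?_
    · intro z hz
      rcases lt_or_eq_of_le (closure_im_nonneg hK hz) with h | h
      · exact Or.inl (Or.inl (hK.2.2.1 z hz h))
      · exact Or.inr ⟨h.symm, hz⟩
    · rintro z ⟨y, hy, rfl⟩
      rcases lt_or_eq_of_le (closure_im_nonneg hK hy) with h | h
      · exact Or.inl (Or.inr ⟨y, hK.2.2.1 y hy h, rfl⟩)
      · have hcy : (starRingEnd ℂ) y = y := Complex.conj_eq_iff_im.mpr h.symm
        rw [hcy]
        exact Or.inr ⟨by simpa using h.symm, hy⟩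

lemma isOpen_sigma (hK : IsHull K) : IsOpen (SigmaStar K) := by
  rw [SigmaStar, bad_eq hK]
  have hcl : IsClosed (closure K ∪ (starRingEnd ℂ) '' closure K) := by
    refine isClosed_closure.union ?_
    rw [conj_image_eq_preimage]
    exact isClosed_closure.preimage continuous_conj'
  exact hcl.isOpen_compl

lemma sigma_mono {H : Set ℂ} (hKH : K ⊆ H) : SigmaStar H ⊆ SigmaStar K := by
  apply Set.compl_subset_compl.mpr
  refine Set.union_subset_union (Set.union_subset_union hKH (Set.image_mono hKH)) ?_
  exact fun z hz => ⟨hz.1, closure_mono hKH hz.2⟩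

lemma conj_mem_sigma {z : ℂ} (hz : z ∈ SigmaStar K) : (starRingEnd ℂ) z ∈ SigmaStar K := by
  intro hmem
  apply hz
  rcases hmem with (h | h) | h
  · exact Or.inl (Or.inr ⟨(starRingEnd ℂ) z, h, Complex.conj_conj z⟩)
  · rcases h with ⟨y, hy, hyz⟩
    have : y = z := by
      have := congrArg (starRingEnd ℂ) hyz
      simpa [Complex.conj_conj] using this
    exact Or.inl (Or.inl (this ▸ hy))
  · have him : z.im = 0 := by simpa using h.1
    have : (starRingEnd ℂ) z = z := Complex.conj_eq_iff_im.mpr him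
    exact Or.inr ⟨him, this ▸ h.2⟩

lemma uhp_diff_subset_sigma (hK : IsHull K) : UHP \ K ⊆ SigmaStar K := by
  rintro z ⟨hz1, hz2⟩
  intro hmem
  rcases hmem with (h | h) | h
  · exact hz2 h
  · rcases h with ⟨y, hy, rfl⟩
    have : 0 < y.im := hK.1 hy
    have : ((starRingEnd ℂ) y).im < 0 := by simpa using this
    exact absurd hz1 (by simp only [UHP, Set.mem_setOf_eq]; linarith)
  · have : (0:ℝ) < z.im := hz1
    rw [h.1] at this; exact lt_irrefl 0 this

lemma uhp_diff_eq (hK : IsHull K) : UHP \ K = UHP \ closure K := by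
  apply Set.Subset.antisymm
  · rintro z ⟨hz1, hz2⟩
    exact ⟨hz1, fun hcl => hz2 (hK.2.2.1 z hcl hz1)⟩
  · exact Set.diff_subset_diff_right subset_closure

lemma isOpen_uhp_diff (hK : IsHull K) : IsOpen (UHP \ K) := by
  rw [uhp_diff_eq hK]
  have h1 : IsOpen UHP := by
    have : UHP = Complex.im ⁻¹' (Set.Ioi 0) := rfl
    rw [this]; exact isOpen_Ioi.preimage Complex.continuous_im
  exact h1.sdiff isClosed_closure


lemma ext_subset_sigma (hc : Ctx K φ c R) {z : ℂ} (hz : R ≤ ‖z‖) :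
    z ∈ SigmaStar K := by
  intro hmem
  rw [bad_eq hc.hK] at hmem
  have habs : ∀ w ∈ closure K, ‖w‖ < R := by
    intro w hw
    have := hc.hKR hw
    rwa [Metric.mem_ball, Complex.dist_eq, sub_zero] at this
  rcases hmem with h | ⟨y, hy, rfl⟩
  · exact absurd hz (not_le.mpr (habs z h))
  · rw [Complex.abs_conj] at hz
    exact absurd hz (not_le.mpr (habs y hy))

lemma notmem_K_of_abs (hc : Ctx K φ c R) {z : ℂ} (hz : R ≤ ‖z‖) : z ∉ K := by
  intro hzK
  have := hc.hKR (subset_closure hzK)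
  rw [Metric.mem_ball, Complex.dist_eq, sub_zero] at this
  exact absurd hz (not_le.mpr this)

lemma phi_real (hc : Ctx K φ c R) {x : ℂ} (hx : x ∈ SigmaStar K) (him : x.im = 0) :
    (φ x).im = 0 := by
  have hcx : (starRingEnd ℂ) x = x := Complex.conj_eq_iff_im.mpr him
  have := hc.symm x hx
  rw [hcx] at this
  exact Complex.conj_eq_iff_im.mp this.symm

lemma h_conj (hc : Ctx K φ c R) {z : ℂ} (hz : z ∈ SigmaStar K) :
    φ ((starRingEnd ℂ) z) - (starRingEnd ℂ) z = (starRingEnd ℂ) (φ z - z) := by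
  rw [hc.symm z hz, map_sub]

lemma phi_im_pos (hc : Ctx K φ c R) {z : ℂ} (hz : z ∈ UHP \ K) : 0 < (φ z).im := by
  have : φ z ∈ UHP := hc.image ▸ Set.mem_image_of_mem φ hz
  exact this

lemma abs_le_abs_add_im {z : ℂ} (him : z.im = 0) {t : ℝ} :
    ‖z‖ ≤ ‖z + t * Complex.I‖ := by
  rw [Complex.abs_apply, Complex.abs_apply]
  apply Real.sqrt_le_sqrt
  rw [Complex.normSq_apply, Complex.normSq_apply]
  simp [him]
  nlinarith [sq_nonneg t]

lemma decay (hc : Ctx K φ c R) :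
    ∃ B Rd : ℝ, 0 < B ∧ R ≤ Rd ∧ ∀ z : ℂ, Rd ≤ ‖z‖ →
      ‖φ z - z‖ ≤ B / ‖z‖ := by
  obtain ⟨C, Rn, hC, hnorm⟩ := hc.norm'
  refine ⟨|c| + C, max R Rn, by positivity, le_max_left _ _, ?_⟩
  have hup : ∀ z : ℂ, max R Rn ≤ ‖z‖ → 0 < z.im →
      ‖φ z - z‖ ≤ (|c| + C) / ‖z‖ := by
    intro z hz him
    have habsR : R ≤ ‖z‖ := le_trans (le_max_left _ _) hz
    have habs1 : (1:ℝ) ≤ ‖z‖ := le_trans hc.hR1 habsR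
    have habs0 : (0:ℝ) < ‖z‖ := lt_of_lt_of_le zero_lt_one habs1
    have hzK : z ∈ UHP \ K := ⟨him, notmem_K_of_abs hc habsR⟩
    have h1 := hnorm z hzK (le_trans (le_max_right _ _) hz)
    have h2 : ‖φ z - z‖ ≤ C / ‖z‖ ^ 2 + ‖(c:ℂ) / z‖ := by
      calc ‖φ z - z‖ = ‖(φ z - z - (c:ℂ)/z) + (c:ℂ)/z‖ := by ring_nf
        _ ≤ ‖φ z - z - (c:ℂ)/z‖ + ‖(c:ℂ)/z‖ := Complex.abs.add_le _ _
        _ ≤ C / ‖z‖ ^ 2 + ‖(c:ℂ)/z‖ := by linarith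
    have h3 : ‖(c:ℂ) / z‖ = |c| / ‖z‖ := by
      rw [norm_div, Complex.abs_ofReal]
    rw [h3] at h2
    have h4 : C / ‖z‖ ^ 2 ≤ C / ‖z‖ := by
      apply div_le_div_of_nonneg_left hC.le habs0
      nlinarith
    calc ‖φ z - z‖ ≤ C / ‖z‖ + |c| / ‖z‖ := by linarith
      _ = (|c| + C) / ‖z‖ := by ring
  intro z hz
  have habsR : R ≤ ‖z‖ := le_trans (le_max_left _ _) hz
  have habs0 : (0:ℝ) < ‖z‖ := lt_of_lt_of_le (lt_of_lt_of_le zero_lt_one hc.hR1) habsR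
  rcases lt_trichotomy z.im 0 with him | him | him
  · -- lower half: use symmetry
    have hcz : ((starRingEnd ℂ) z).im > 0 := by simpa using him
    have hczabs : ‖(starRingEnd ℂ) z‖ = ‖z‖ := Complex.abs_conj z
    have hmem : (starRingEnd ℂ) z ∈ SigmaStar K :=
      ext_subset_sigma hc (by rw [hczabs]; exact habsR)
    have hsym := h_conj hc hmem
    rw [Complex.conj_conj] at hsym
    have : ‖φ z - z‖ = ‖φ ((starRingEnd ℂ) z) - (starRingEnd ℂ) z‖ := by
      rw [hsym, Complex.abs_conj]
    rw [this]
    have := hup ((starRingEnd ℂ) z) (by rw [hczabs]; exact hz) hcz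
    rwa [hczabs] at this
  · -- real: take limits from above
    have hzS : z ∈ SigmaStar K := ext_subset_sigma hc habsR
    have hcont : ContinuousAt (fun w => ‖φ w - w‖) z := by
      have h1 : ContinuousAt φ z := (hc.analytic z hzS).continuousAt
      exact (Complex.continuous_abs.continuousAt).comp (h1.sub continuousAt_id)
    have hten : Tendsto (fun t : ℝ => ‖φ (z + t*Complex.I) - (z + t*Complex.I)‖)
        (nhdsWithin 0 (Set.Ioi 0)) (nhds (‖φ z - z‖)) := by
      have hmap : Tendsto (fun t : ℝ => z + t*Complex.I) (nhdsWithin 0 (Set.Ioi 0)) (nhds z) := by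
        have : Continuous (fun t : ℝ => z + t*Complex.I) := by continuity
        have h0 := this.tendsto 0
        simp only [Complex.ofReal_zero, zero_mul, add_zero] at h0
        exact h0.mono_left nhdsWithin_le_nhds
      exact hcont.tendsto.comp hmap
    apply le_of_tendsto hten
    filter_upwards [self_mem_nhdsWithin] with t ht
    have htpos : (0:ℝ) < t := ht
    have habs' : ‖z‖ ≤ ‖z + t*Complex.I‖ := abs_le_abs_add_im him
    have him' : (z + t*Complex.I).im > 0 := by simp [him, htpos]
    have := hup (z + t*Complex.I) (le_trans hz habs') him'
    calc ‖φ (z + t*Complex.I) - (z + t*Complex.I)‖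
        ≤ (|c| + C) / ‖z + t*Complex.I‖ := this
      _ ≤ (|c| + C) / ‖z‖ := by
          apply div_le_div_of_nonneg_left (by positivity) habs0 habs'
  · exact hup z hz him

lemma not_ev_const (hc : Ctx K φ c R) {z : ℂ} (hz : z ∈ UHP \ K) :
    ¬ (∀ᶠ y in nhds z, φ y = φ z) := by
  intro hev
  obtain ⟨r1, hr1, hball1⟩ := Metric.mem_nhds_iff.mp hev
  obtain ⟨r2, hr2, hball2⟩ := Metric.mem_nhds_iff.mp
    ((isOpen_uhp_diff hc.hK).mem_nhds hz)
  set r := min r1 r2 / 2 with hrdef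
  have hrpos : 0 < r := by positivity
  set y := z + (r:ℂ) with hydef
  have hdist : dist y z = r := by
    rw [hydef, Complex.dist_eq, add_sub_cancel_left, Complex.abs_ofReal, abs_of_pos hrpos]
  have hy1 : y ∈ Metric.ball z r1 := by
    rw [Metric.mem_ball, hdist]
    calc r < min r1 r2 := by rw [hrdef]; linarith [lt_min hr1 hr2]
      _ ≤ r1 := min_le_left _ _
  have hy2 : y ∈ Metric.ball z r2 := by
    rw [Metric.mem_ball, hdist]
    calc r < min r1 r2 := by rw [hrdef]; linarith [lt_min hr1 hr2]
      _ ≤ r2 := min_le_right _ _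
  have : y = z := hc.inj (hball2 hy2) hz (hball1 hy1)
  rw [hydef] at this
  have : (r:ℂ) = 0 := by linear_combination this
  exact hrpos.ne' (by exact_mod_cast this)

lemma nhds_le_map (hc : Ctx K φ c R) {z : ℂ} (hz : z ∈ UHP \ K) :
    nhds (φ z) ≤ Filter.map φ (nhds z) := by
  have ha : AnalyticAt ℂ φ z := hc.analytic z (uhp_diff_subset_sigma hc.hK hz)
  rcases ha.eventually_constant_or_nhds_le_map_nhds with h | h
  · exact absurd h (not_ev_const hc hz)
  · exact h

lemma image_open (hc : Ctx K φ c R) {U : Set ℂ} (hU : IsOpen U) (hsub : U ⊆ UHP \ K) :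
    IsOpen (φ '' U) := by
  rw [isOpen_iff_mem_nhds]
  rintro w ⟨z, hzU, rfl⟩
  apply nhds_le_map hc (hsub hzU)
  rw [Filter.mem_map]
  exact Filter.mem_of_superset (hU.mem_nhds hzU) (Set.subset_preimage_image φ U)

lemma inv_cont (hc : Ctx K φ c R) {z' : ℂ} (hz' : z' ∈ UHP \ K) {u : ℕ → ℂ}
    (hu : ∀ n, u n ∈ UHP \ K)
    (hten : Tendsto (fun n => φ (u n)) atTop (nhds (φ z'))) :
    Tendsto u atTop (nhds z') := by
  rw [Metric.tendsto_atTop]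
  intro ε hε
  obtain ⟨r0, hr0, hball0⟩ := Metric.mem_nhds_iff.mp
    ((isOpen_uhp_diff hc.hK).mem_nhds hz')
  set r := min ε r0 with hr
  have hrpos : 0 < r := lt_min hε hr0
  have hmem : φ '' Metric.ball z' r ∈ nhds (φ z') := by
    apply nhds_le_map hc hz'
    rw [Filter.mem_map]
    exact Filter.mem_of_superset (Metric.ball_mem_nhds z' hrpos)
      (Set.subset_preimage_image φ _)
  have hev : {n : ℕ | φ (u n) ∈ φ '' Metric.ball z' r} ∈ atTop :=
    Filter.mem_map.mp (hten hmem)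
  rw [Filter.mem_atTop_sets] at hev
  obtain ⟨N, hN⟩ := hev
  refine ⟨N, fun n hn => ?_⟩
  obtain ⟨y, hy, hyeq⟩ := hN n hn
  have hyb : dist y z' < r := Metric.mem_ball.mp hy
  have hyuk : y ∈ UHP \ K := hball0 (Metric.mem_ball.mpr (lt_of_lt_of_le hyb (min_le_right _ _)))
  have huy : u n = y := hc.inj (hu n) hyuk hyeq.symm
  rw [huy]
  exact lt_of_lt_of_le hyb (min_le_left _ _)


lemma T_preconnected (s : ℝ) : IsPreconnected {w : ℂ | 0 < w.im ∧ s < ‖w‖} := by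
  have hs : {w : ℂ | 0 < w.im ∧ s < ‖w‖} =
      (fun p : ℝ × ℝ => (p.1 : ℂ) * Complex.exp (p.2 * Complex.I)) ''
        (Set.Ioi s ∩ Set.Ioi 0) ×ˢ Set.Ioo 0 Real.pi := by
    apply Set.Subset.antisymm
    · rintro w ⟨him, habs⟩
      have hw0 : w ≠ 0 := by
        intro h; rw [h] at him; simp at him
      refine ⟨⟨‖w‖, Complex.arg w⟩, ⟨⟨habs, Complex.abs.pos hw0⟩, ?_, ?_⟩, ?_⟩
      · rcases lt_or_eq_of_le (Complex.arg_nonneg_iff.mpr him.le) with h | h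
        · exact h
        · exfalso
          have := Complex.arg_eq_zero_iff.mp h.symm
          rw [this.2] at him; exact lt_irrefl 0 him
      · exact Complex.arg_lt_pi_iff.mpr (Or.inr him.ne')
      · exact Complex.abs_mul_exp_arg_mul_I w
    · rintro w ⟨⟨r, θ⟩, ⟨⟨hr1, hr0⟩, hθ⟩, rfl⟩
      have hr0' : (0:ℝ) < r := Set.mem_Ioi.mp hr0
      have hsin : 0 < Real.sin θ := Real.sin_pos_of_pos_of_lt_pi hθ.1 hθ.2
      have him : ((r:ℂ) * Complex.exp (θ * Complex.I)).im = r * Real.sin θ := by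
        rw [Complex.exp_mul_I]
        simp [Complex.mul_im, Complex.cos_ofReal_re, Complex.sin_ofReal_re]
      have habs : ‖(r:ℂ) * Complex.exp (θ * Complex.I)‖ = r := by
        rw [norm_mul, Complex.abs_ofReal, Complex.abs_exp]
        have h2 : ((θ:ℂ) * Complex.I).re = 0 := by simp
        rw [h2, Real.exp_zero, mul_one, abs_of_pos hr0']
      refine ⟨?_, ?_⟩
      · show 0 < ((r:ℂ) * Complex.exp (θ * Complex.I)).im
        rw [him]; positivity
      · show s < ‖(r:ℂ) * Complex.exp (θ * Complex.I)‖
        rw [habs]; exact Set.mem_Ioi.mp hr1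
  rw [hs]
  apply IsPreconnected.image
  · rw [Set.Ioi_inter_Ioi]
    exact isPreconnected_Ioi.prod isPreconnected_Ioo
  · apply Continuous.continuousOn
    continuity



lemma isOpen_E (ρ : ℝ) : IsOpen {ζ : ℂ | 0 < ζ.im ∧ ρ < ‖ζ‖} := by
  apply IsOpen.inter
  · exact isOpen_Ioi.preimage Complex.continuous_im
  · exact isOpen_Ioi.preimage Complex.continuous_abs

lemma clopen (hc : Ctx K φ c R) {ρ β : ℝ} (hρ : R ≤ ρ) (hβ : 0 ≤ β)
    (hb : ∀ ζ : ℂ, ρ ≤ ‖ζ‖ → ‖φ ζ - ζ‖ ≤ β) {z : ℂ}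
    (hz : z ∈ UHP \ K) (hzρ : ‖z‖ ≤ ρ) :
    ‖φ z‖ ≤ ρ + 2*β + 1 := by
  have hρ1 : (1:ℝ) ≤ ρ := le_trans hc.hR1 hρ
  by_contra hgt
  push_neg at hgt
  set T := {w : ℂ | 0 < w.im ∧ ρ + 2*β + 1 < ‖w‖} with hT
  set E := {ζ : ℂ | 0 < ζ.im ∧ ρ < ‖ζ‖} with hE
  have hEsub : E ⊆ UHP \ K := fun ζ hζ => ⟨hζ.1, notmem_K_of_abs hc (le_trans hρ hζ.2.le)⟩
  have himg : IsOpen (φ '' E) := image_open hc (isOpen_E ρ) hEsub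
  have hTsub : T ⊆ φ '' E := by
    apply (T_preconnected _).subset_of_closure_inter_subset himg
    · -- nonempty
      set ζ0 : ℂ := ((ρ + 3*β + 3 : ℝ) : ℂ) * Complex.I with hζ0
      have habs0 : ‖ζ0‖ = ρ + 3*β + 3 := by
        rw [hζ0, norm_mul, Complex.abs_I, mul_one, Complex.abs_ofReal, abs_of_pos (by linarith)]
      have him0 : ζ0.im = ρ + 3*β + 3 := by
        rw [hζ0]; simp
      have hζ0E : ζ0 ∈ E := by
        refine ⟨by rw [him0]; linarith, by rw [habs0]; linarith⟩
      have hb0 : ‖φ ζ0 - ζ0‖ ≤ β := hb ζ0 (by rw [habs0]; linarith)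
      have htri : ‖ζ0‖ ≤ ‖φ ζ0‖ + ‖φ ζ0 - ζ0‖ := by
        calc ‖ζ0‖ = ‖φ ζ0 - (φ ζ0 - ζ0)‖ := by ring_nf
          _ ≤ ‖φ ζ0‖ + ‖φ ζ0 - ζ0‖ := by
              apply norm_sub_le
      refine ⟨φ ζ0, ⟨phi_im_pos hc (hEsub hζ0E), ?_⟩, Set.mem_image_of_mem φ hζ0E⟩
      rw [habs0] at htri
      linarith
    · -- closure ∩ T ⊆ φ '' E
      rintro w ⟨hwcl, hwT⟩
      have hseq : ∀ n : ℕ, ∃ b ∈ φ '' E, dist w b < 1/(n+1) :=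
        fun n => Metric.mem_closure_iff.mp hwcl _ (by positivity)
      choose u hu hud using hseq
      have hpre : ∀ n, ∃ ζ, ζ ∈ E ∧ φ ζ = u n := fun n => hu n
      choose ζf hζE hζeq using hpre
      have hζbd : ∀ n, ζf n ∈ Metric.closedBall (0:ℂ) (‖w‖ + 1 + β) := by
        intro n
        have h1 : ‖ζf n‖ ≤ ‖u n‖ + β := by
          have hβn : ‖φ (ζf n) - ζf n‖ ≤ β := hb _ (le_of_lt (hζE n).2)
          calc ‖ζf n‖ = ‖φ (ζf n) - (φ (ζf n) - ζf n)‖ := by ring_nf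
            _ ≤ ‖φ (ζf n)‖ + ‖φ (ζf n) - ζf n‖ :=
                norm_sub_le _ _
            _ ≤ ‖u n‖ + β := add_le_add (le_of_eq (by rw [hζeq n])) hβn
        have h2 : ‖u n‖ ≤ ‖w‖ + 1 := by
          have : ‖u n‖ ≤ ‖w‖ + dist w (u n) := by
            rw [Complex.dist_eq]
            calc ‖u n‖ = ‖w - (w - u n)‖ := by ring_nf
              _ ≤ ‖w‖ + ‖w - u n‖ := norm_sub_le _ _
          have hd1 : dist w (u n) ≤ 1 := by
            have := hud n
            have h1n : 1/((n:ℝ)+1) ≤ 1 := by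
              rw [div_le_one (by positivity)]; linarith [Nat.cast_nonneg (α := ℝ) n]
            linarith
          linarith
        rw [Metric.mem_closedBall, Complex.dist_eq, sub_zero]
        linarith
      obtain ⟨ζlim, _, σ, hσmono, hσten⟩ :=
        (isCompact_closedBall (0:ℂ) _).tendsto_subseq hζbd
      have huten : Tendsto u atTop (nhds w) := by
        rw [tendsto_iff_dist_tendsto_zero]
        have hle : ∀ n : ℕ, dist (u n) w ≤ 1/((n:ℝ)+1) := fun n => by
          rw [dist_comm]; exact (hud n).le
        exact squeeze_zero (fun n => dist_nonneg) hle tendsto_one_div_add_atTop_nhds_zero_nat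
      have hφten : Tendsto (fun n => φ (ζf (σ n))) atTop (nhds w) := by
        have : (fun n => φ (ζf (σ n))) = (fun n => u (σ n)) := by
          funext n; exact hζeq (σ n)
        rw [this]
        exact huten.comp (hσmono.tendsto_atTop)
      have habsten : Tendsto (fun n => ‖ζf (σ n)‖) atTop (nhds (‖ζlim‖)) :=
        (Complex.continuous_abs.continuousAt.tendsto).comp hσten
      have hρle : ρ ≤ ‖ζlim‖ :=
        ge_of_tendsto habsten (Filter.Eventually.of_forall (fun n => le_of_lt (hζE (σ n)).2))
      have hζS : ζlim ∈ SigmaStar K := ext_subset_sigma hc (le_trans hρ hρle)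
      have hφcont : Tendsto (fun n => φ (ζf (σ n))) atTop (nhds (φ ζlim)) :=
        ((hc.analytic ζlim hζS).continuousAt.tendsto).comp hσten
      have hφeq : φ ζlim = w := tendsto_nhds_unique hφcont hφten
      have himten : Tendsto (fun n => (ζf (σ n)).im) atTop (nhds ζlim.im) :=
        (Complex.continuous_im.continuousAt.tendsto).comp hσten
      have him0 : 0 ≤ ζlim.im :=
        ge_of_tendsto himten (Filter.Eventually.of_forall (fun n => le_of_lt (hζE (σ n)).1))
      have himpos : 0 < ζlim.im := by
        rcases lt_or_eq_of_le him0 with h | h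
        · exact h
        · exfalso
          have := phi_real hc hζS h.symm
          rw [hφeq] at this
          exact absurd hwT.1 (by rw [this]; exact lt_irrefl 0)
      have habsgt : ρ < ‖ζlim‖ := by
        rcases lt_or_eq_of_le hρle with h | h
        · exact h
        · exfalso
          have hb1 : ‖φ ζlim - ζlim‖ ≤ β := hb _ h.le.ge
          have : ‖w‖ ≤ ρ + β := by
            rw [← hφeq]
            calc ‖φ ζlim‖ = ‖ζlim + (φ ζlim - ζlim)‖ := by ring_nf
              _ ≤ ‖ζlim‖ + ‖φ ζlim - ζlim‖ := Complex.abs.add_le _ _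
              _ ≤ ρ + β := by rw [← h]; linarith
          have := hwT.2
          linarith
      exact ⟨ζlim, ⟨himpos, habsgt⟩, hφeq⟩
  have hwT : φ z ∈ T := ⟨phi_im_pos hc hz, hgt⟩
  obtain ⟨ζ, hζE, hζeq⟩ := hTsub hwT
  have : z = ζ := hc.inj hz (hEsub hζE) hζeq.symm
  rw [this] at hzρ
  exact absurd hzρ (not_le.mpr hζE.2)



lemma key (hc : Ctx K φ c R) {ε Sr : ℝ} (hε : 0 < ε) :
    ∃ δ > (0:ℝ), ∀ z : ℂ, 0 < z.im → z ∉ K → ‖z‖ ≤ Sr →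
      min z.im (Metric.infDist z (closure K ∪ {0})) ≤ δ → (φ z).im ≤ ε := by
  by_contra hcon
  push_neg at hcon
  have hch : ∀ n : ℕ, ∃ z : ℂ, 0 < z.im ∧ z ∉ K ∧ ‖z‖ ≤ Sr ∧
      min z.im (Metric.infDist z (closure K ∪ {0})) ≤ 1/(n+1) ∧ ε < (φ z).im := by
    intro n
    obtain ⟨z, hz1, hz2, hz3, hz4, hz5⟩ := hcon (1/(n+1)) (by positivity)
    exact ⟨z, hz1, hz2, hz3, hz4, hz5⟩
  choose zf h1 h2 h3 h4 h5 using hch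
  obtain ⟨B, Rd, hB, hRd, hdec⟩ := decay hc
  set ρ := max Rd Sr with hρdef
  have hRρ : R ≤ ρ := le_trans hRd (le_max_left _ _)
  have h1ρ : (1:ℝ) ≤ ρ := le_trans hc.hR1 hRρ
  have hbB : ∀ ζ : ℂ, ρ ≤ ‖ζ‖ → ‖φ ζ - ζ‖ ≤ B := by
    intro ζ hζ
    have h1' : ‖φ ζ - ζ‖ ≤ B / ‖ζ‖ :=
      hdec ζ (le_trans (le_max_left _ _) hζ)
    have : B / ‖ζ‖ ≤ B := by
      apply div_le_self hB.le (le_trans h1ρ hζ)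
    linarith
  have hzuk : ∀ n, zf n ∈ UHP \ K := fun n => ⟨h1 n, h2 n⟩
  have hφbd : ∀ n, ‖φ (zf n)‖ ≤ ρ + 2*B + 1 := fun n =>
    clopen hc hRρ hB.le hbB (hzuk n) (le_trans (h3 n) (le_max_right _ _))
  obtain ⟨ζ, _, σ, hσ, hζten⟩ := (isCompact_closedBall (0:ℂ) ρ).tendsto_subseq
    (x := zf) (fun n => by
      rw [Metric.mem_closedBall, Complex.dist_eq, sub_zero]
      exact le_trans (h3 n) (le_max_right _ _))
  obtain ⟨w, _, τ, hτ, hwten⟩ := (isCompact_closedBall (0:ℂ) (ρ+2*B+1)).tendsto_subseq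
    (x := fun n => φ (zf (σ n))) (fun n => by
      rw [Metric.mem_closedBall, Complex.dist_eq, sub_zero]
      exact hφbd (σ n))
  have hζten2 : Tendsto (fun n => zf (σ (τ n))) atTop (nhds ζ) :=
    hζten.comp (hτ.tendsto_atTop)
  have hwim : ε ≤ w.im := by
    have : Tendsto (fun n => (φ (zf (σ (τ n)))).im) atTop (nhds w.im) :=
      (Complex.continuous_im.continuousAt.tendsto).comp hwten
    exact ge_of_tendsto this (Filter.Eventually.of_forall (fun n => (h5 _).le))
  have hwU : w ∈ UHP := lt_of_lt_of_le hε hwim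
  have hwimg : w ∈ φ '' (UHP \ K) := hc.image.symm ▸ hwU
  obtain ⟨zs, hzs, hzseq⟩ := hwimg
  have hwten' : Tendsto (fun n => φ (zf (σ (τ n)))) atTop (nhds (φ zs)) := by
    rw [hzseq]; exact hwten
  have hzten : Tendsto (fun n => zf (σ (τ n))) atTop (nhds zs) :=
    inv_cont hc hzs (fun n => hzuk _) hwten'
  have hζzs : ζ = zs := tendsto_nhds_unique hζten2 hzten
  set W := closure K ∪ ({0} : Set ℂ) with hW
  have hWclosed : IsClosed W := isClosed_closure.union isClosed_singleton
  have hWne : W.Nonempty := ⟨0, Or.inr rfl⟩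
  have hmin : min ζ.im (Metric.infDist ζ W) ≤ 0 := by
    have hcont : Tendsto (fun n => min (zf (σ (τ n))).im (Metric.infDist (zf (σ (τ n))) W))
        atTop (nhds (min ζ.im (Metric.infDist ζ W))) := by
      apply Filter.Tendsto.min
      · exact (Complex.continuous_im.continuousAt.tendsto).comp hζten2
      · exact ((continuous_infDist_pt W).continuousAt.tendsto).comp hζten2
    have hten0 : Tendsto (fun n : ℕ => 1/((n:ℝ)+1)) atTop (nhds 0) :=
      tendsto_one_div_add_atTop_nhds_zero_nat
    apply le_of_tendsto_of_tendsto' hcont hten0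
    intro n
    calc min (zf (σ (τ n))).im (Metric.infDist (zf (σ (τ n))) W) ≤ 1/((σ (τ n):ℝ)+1) := h4 _
      _ ≤ 1/((n:ℝ)+1) := by
          apply div_le_div_of_nonneg_left zero_le_one (by positivity)
          have hnle : n ≤ σ (τ n) := le_trans (hτ.le_apply) (hσ.le_apply)
          have : (n:ℝ) ≤ (σ (τ n) : ℝ) := Nat.cast_le.mpr hnle
          linarith
  rw [hζzs] at hmin
  have himpos : 0 < zs.im := hzs.1
  have hinf0 : Metric.infDist zs W ≤ 0 := by
    rcases min_le_iff.mp hmin with h | h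
    · linarith
    · exact h
  have hzsW : zs ∈ W := by
    rw [hWclosed.mem_iff_infDist_zero hWne]
    exact le_antisymm hinf0 Metric.infDist_nonneg
  rcases hzsW with h | h
  · exact hzs.2 (hc.hK.2.2.1 zs h himpos)
  · rw [Set.mem_singleton_iff] at h
    rw [h] at himpos
    simp at himpos



lemma re_neg_I_mul (w : ℂ) : (-(Complex.I * w)).re = w.im := by
  simp [Complex.mul_re]

lemma imF (hc : Ctx K φ c R) {z : ℂ} (him : 0 < z.im) (hz : R ≤ ‖z‖) :
    (φ z).im ≤ z.im := by
  have habs0 : (0:ℝ) < ‖z‖ := lt_of_lt_of_le (lt_of_lt_of_le zero_lt_one hc.hR1) hz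
  set W := closure K ∪ ({0}:Set ℂ) with hWdef
  have hWclosed : IsClosed W := isClosed_closure.union isClosed_singleton
  have hWne : W.Nonempty := ⟨0, Or.inr rfl⟩
  have hzW : z ∉ W := by
    rintro (h | h)
    · have := hc.hKR h
      rw [Metric.mem_ball, Complex.dist_eq, sub_zero] at this
      linarith
    · rw [Set.mem_singleton_iff] at h
      rw [h] at him; simp at him
  have hdW : 0 < Metric.infDist z W := (hWclosed.notMem_iff_infDist_pos hWne).mp hzW
  have main : ∀ ε : ℝ, 0 < ε → (φ z).im - z.im ≤ ε := by
    intro ε hε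
    obtain ⟨B, Rd, hB, hRd, hdec⟩ := decay hc
    obtain ⟨S, hSz, hSRd, hSB⟩ : ∃ S : ℝ, ‖z‖ < S ∧ Rd ≤ S ∧ B / S ≤ ε := by
      refine ⟨max (max (B/ε) (‖z‖)) Rd + 1, ?_, ?_, ?_⟩
      · linarith [le_max_right (B/ε) (‖z‖),
          le_max_left (max (B/ε) (‖z‖)) Rd]
      · linarith [le_max_right (max (B/ε) (‖z‖)) Rd]
      · have hBε : B/ε ≤ max (max (B/ε) (‖z‖)) Rd + 1 := by
          linarith [le_max_left (B/ε) (‖z‖),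
            le_max_left (max (B/ε) (‖z‖)) Rd]
        have hSpos : (0:ℝ) < max (max (B/ε) (‖z‖)) Rd + 1 := by
          linarith [le_max_left (B/ε) (‖z‖),
            le_max_left (max (B/ε) (‖z‖)) Rd, div_pos hB hε]
        rw [div_le_iff₀ hSpos]
        rw [div_le_iff₀ hε] at hBε
        linarith
    have hSR : R ≤ S := le_trans hRd hSRd
    have hS0 : (0:ℝ) < S := lt_of_lt_of_le (lt_of_lt_of_le zero_lt_one hc.hR1) hSR
    obtain ⟨δ0, hδ0, hkey⟩ := key hc (ε := ε) (Sr := S) hε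
    set δ := min (min δ0 (z.im/2)) (Metric.infDist z W / 2) with hδdef
    have hδpos : 0 < δ := lt_min (lt_min hδ0 (by linarith)) (by linarith)
    have hδ0' : δ ≤ δ0 := le_trans (min_le_left _ _) (min_le_left _ _)
    set D := {y : ℂ | ‖y‖ < S ∧ δ < y.im ∧ δ < Metric.infDist y W} with hDdef
    have hDopen : IsOpen D := by
      apply IsOpen.inter
      · exact isOpen_Iio.preimage Complex.continuous_abs
      apply IsOpen.inter
      · exact isOpen_Ioi.preimage Complex.continuous_im
      · exact isOpen_Ioi.preimage (continuous_infDist_pt W)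
    have hDsub : D ⊆ Metric.ball (0:ℂ) S := by
      intro y hy
      rw [Metric.mem_ball, Complex.dist_eq, sub_zero]
      exact hy.1
    have hDbdd : Bornology.IsBounded D :=
      (Metric.isBounded_ball).subset hDsub
    set Dcl := {y : ℂ | ‖y‖ ≤ S ∧ δ ≤ y.im ∧ δ ≤ Metric.infDist y W} with hDcl
    have hclD : closure D ⊆ Dcl := by
      apply closure_minimal
      · exact fun y hy => ⟨hy.1.le, hy.2.1.le, hy.2.2.le⟩
      · refine IsClosed.inter ?_ (IsClosed.inter ?_ ?_)
        · exact isClosed_Iic.preimage Complex.continuous_abs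
        · exact isClosed_Ici.preimage Complex.continuous_im
        · exact isClosed_Ici.preimage (continuous_infDist_pt W)
    have hDclS : Dcl ⊆ SigmaStar K := by
      rintro y ⟨_, hy2, hy3⟩
      have hyim : 0 < y.im := lt_of_lt_of_le hδpos hy2
      have hynK : y ∉ closure K := by
        intro hyK
        have h0 : Metric.infDist y W = 0 :=
          Metric.infDist_zero_of_mem (show y ∈ W from Or.inl hyK)
        rw [h0] at hy3; linarith
      intro hmem
      rcases hmem with (h | h) | h
      · exact hynK (subset_closure h)
      · rcases h with ⟨x, hx, rfl⟩
        have : 0 < x.im := hc.hK.1 hx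
        have : ((starRingEnd ℂ) x).im < 0 := by simpa using this
        linarith
      · rw [h.1] at hyim; exact lt_irrefl 0 hyim
    set f : ℂ → ℂ := fun y => Complex.exp (-(Complex.I * (φ y - y))) with hfdef
    have hfabs : ∀ y, ‖f y‖ = Real.exp ((φ y - y).im) := by
      intro y
      rw [hfdef]
      simp only
      rw [Complex.abs_exp, re_neg_I_mul]
    have hfan : ∀ y ∈ Dcl, AnalyticAt ℂ f y := by
      intro y hy
      have h1 : AnalyticAt ℂ (fun w => φ w - w) y := (hc.analytic y (hDclS hy)).sub analyticAt_id
      have h2 : AnalyticAt ℂ (fun w => -(Complex.I * (φ w - w))) y :=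
        (analyticAt_const.mul h1).neg
      exact h2.cexp
    have hdiff : DiffContOnCl ℂ f D := by
      constructor
      · exact fun y hy => (hfan y (hclD (subset_closure hy))).differentiableAt.differentiableWithinAt
      · exact fun y hy => (hfan y (hclD hy)).continuousAt.continuousWithinAt
    have hfr : ∀ y ∈ frontier D, ‖f y‖ ≤ Real.exp ε := by
      intro y hyfr
      have hycl : y ∈ Dcl := hclD hyfr.1
      have hynD : y ∉ D := by
        rw [frontier, hDopen.interior_eq] at hyfr
        exact hyfr.2
      rw [Complex.norm_eq_abs, hfabs, Real.exp_le_exp]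
      have hyim : 0 < y.im := lt_of_lt_of_le hδpos hycl.2.1
      have hynK : y ∉ K := by
        intro hyK
        have h0 : Metric.infDist y W = 0 :=
          Metric.infDist_zero_of_mem (show y ∈ W from Or.inl (subset_closure hyK))
        have := hycl.2.2
        rw [h0] at this
        linarith
      have hcases : ‖y‖ = S ∨ y.im = δ ∨ Metric.infDist y W = δ := by
        by_contra hno
        push_neg at hno
        exact hynD ⟨lt_of_le_of_ne hycl.1 hno.1,
          lt_of_le_of_ne hycl.2.1 (Ne.symm hno.2.1),
          lt_of_le_of_ne hycl.2.2 (Ne.symm hno.2.2)⟩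
      rcases hcases with h | h | h
      · have h1 : ‖φ y - y‖ ≤ B / ‖y‖ := hdec y (by rw [h]; exact hSRd)
        have h2 : (φ y - y).im ≤ ‖φ y - y‖ :=
          le_trans (le_abs_self _) (Complex.abs_im_le_abs _)
        rw [h] at h1
        linarith
      · have := hkey y hyim hynK hycl.1 (le_trans (min_le_left _ _) (by rw [h]; exact hδ0'))
        rw [Complex.sub_im]
        linarith [hyim]
      · have := hkey y hyim hynK hycl.1 (le_trans (min_le_right _ _) (by rw [h]; exact hδ0'))
        rw [Complex.sub_im]
        linarith [hyim]
    have hzD : z ∈ D := by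
      refine ⟨hSz, ?_, ?_⟩
      · calc δ ≤ z.im/2 := le_trans (min_le_left _ _) (min_le_right _ _)
          _ < z.im := by linarith
      · calc δ ≤ Metric.infDist z W / 2 := min_le_right _ _
          _ < Metric.infDist z W := by linarith
    have := Complex.norm_le_of_forall_mem_frontier_norm_le hDbdd hdiff hfr (subset_closure hzD)
    rw [Complex.norm_eq_abs, hfabs, Real.exp_le_exp, Complex.sub_im] at this
    exact this
  by_contra hcon
  push_neg at hcon
  have := main (((φ z).im - z.im)/2) (by linarith)
  linarith



lemma abs_lt_abs_sub_of_im_lt {u : ℂ} {A : ℝ} (hu : u.im < A) (hA : 0 < A) :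
    ‖u‖ < ‖u - 2*A*Complex.I‖ := by
  have h : (‖u‖)^2 < (‖u - 2*A*Complex.I‖)^2 := by
    rw [Complex.sq_abs, Complex.sq_abs, Complex.normSq_apply, Complex.normSq_apply]
    have hre : (u - 2*A*Complex.I).re = u.re := by simp
    have him : (u - 2*A*Complex.I).im = u.im - 2*A := by simp
    rw [hre, him]
    nlinarith
  exact lt_of_pow_lt_pow_left₀ 2 (Complex.abs.nonneg _) h

lemma ext_bound (hc : Ctx K φ c R) {z : ℂ} (hz : 4*R ≤ ‖z‖) :
    ‖φ z - z‖ ≤ 4*R + 2 := by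
  have hR0 : (0:ℝ) < R := lt_of_lt_of_le zero_lt_one hc.hR1
  obtain ⟨B, Rd, hB, hRd, hdec⟩ := decay hc
  set hfun : ℂ → ℂ := fun w => φ w - w with hhdef
  have hanal : ∀ w : ℂ, R ≤ ‖w‖ → AnalyticAt ℂ hfun w := by
    intro w hw
    exact (hc.analytic w (ext_subset_sigma hc hw)).sub analyticAt_id
  -- uniform bound on the outer region
  obtain ⟨B2, hB2, hbdd⟩ : ∃ B2, 0 < B2 ∧ ∀ w : ℂ, 3/2*R ≤ ‖w‖ →
      ‖hfun w‖ ≤ B2 := by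
    set A := Metric.closedBall (0:ℂ) (Rd+1) ∩ {w : ℂ | 3/2*R ≤ ‖w‖} with hA
    have hAcomp : IsCompact A :=
      (isCompact_closedBall _ _).inter_right
        (isClosed_le continuous_const Complex.continuous_abs)
    have hAcont : ContinuousOn hfun A := by
      intro w hw
      exact (hanal w (le_trans (by linarith) hw.2)).continuousAt.continuousWithinAt
    obtain ⟨C0, hC0⟩ := hAcomp.exists_bound_of_continuousOn hAcont
    refine ⟨max C0 B + 1, by positivity, ?_⟩
    intro w hw
    rcases le_or_gt (‖w‖) (Rd+1) with h | h
    · have := hC0 w ⟨by rw [Metric.mem_closedBall, Complex.dist_eq, sub_zero]; exact h, hw⟩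
      rw [Complex.norm_eq_abs] at this
      have := le_max_left C0 B
      linarith [hC0 w ⟨by rw [Metric.mem_closedBall, Complex.dist_eq, sub_zero]; exact h, hw⟩,
        le_max_left C0 B]
    · have h1 : ‖hfun w‖ ≤ B / ‖w‖ := hdec w (by linarith)
      have h2 : B / ‖w‖ ≤ B := by
        apply div_le_self hB.le
        have : (1:ℝ) ≤ 3/2*R := by linarith [hc.hR1]
        linarith
      linarith [le_max_right C0 B]
  -- the function g in the chart at infinity
  set g : ℂ → ℂ := Function.update (fun w => hfun w⁻¹) 0 0 with hgdef
  have hgval : ∀ w : ℂ, w ≠ 0 → g w = hfun w⁻¹ := by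
    intro w hw; rw [hgdef]; exact Function.update_of_ne hw _ _
  have hg0 : g 0 = 0 := by rw [hgdef]; exact Function.update_self _ _ _
  have hRd0 : (0:ℝ) < Rd := lt_of_lt_of_le (lt_of_lt_of_le zero_lt_one hc.hR1) hRd
  have hglim : Tendsto (fun w : ℂ => hfun w⁻¹) (nhdsWithin 0 {(0:ℂ)}ᶜ) (nhds 0) := by
    apply squeeze_zero_norm' (a := fun w : ℂ => B * ‖w‖)
    · filter_upwards [self_mem_nhdsWithin,
        inter_mem_nhdsWithin _ (Metric.ball_mem_nhds (0:ℂ) (show (0:ℝ) < Rd⁻¹ by positivity))]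
      intro w hw1 hw2
      have hw0 : w ≠ 0 := hw1
      have hwb : ‖w‖ < Rd⁻¹ := by
        have := hw2.2
        rwa [Metric.mem_ball, Complex.dist_eq, sub_zero] at this
      have hwpos : 0 < ‖w‖ := Complex.abs.pos hw0
      have hinv : Rd ≤ ‖w⁻¹‖ := by
        rw [norm_inv]
        rw [le_inv_comm₀ hRd0 hwpos]
        exact hwb.le
      have := hdec _ hinv
      rw [Complex.norm_eq_abs, Complex.norm_eq_abs]
      calc ‖hfun w⁻¹‖ ≤ B / ‖w⁻¹‖ := this
        _ = B * ‖w‖ := by rw [norm_inv]; field_simp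
    · have hcont : Continuous (fun w : ℂ => B * ‖w‖) := continuous_const.mul continuous_norm
      have h0 := hcont.tendsto 0
      simp only [norm_zero, mul_zero] at h0
      exact h0.mono_left nhdsWithin_le_nhds
  have hd32 : (0:ℝ) < (3/2*R)⁻¹ := by positivity
  have hgdiff : DifferentiableOn ℂ g (Metric.ball 0 (3/2*R)⁻¹) := by
    have hnb : Metric.ball (0:ℂ) (3/2*R)⁻¹ ∈ nhds (0:ℂ) := Metric.ball_mem_nhds _ hd32
    have hd : DifferentiableOn ℂ (fun w : ℂ => hfun w⁻¹)
        (Metric.ball (0:ℂ) (3/2*R)⁻¹ \ {0}) := by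
      rintro w ⟨hw1, hw2⟩
      have hw0 : w ≠ (0:ℂ) := hw2
      have hwb : ‖w‖ < (3/2*R)⁻¹ := by
        rw [Metric.mem_ball, Complex.dist_eq, sub_zero] at hw1; exact hw1
      have hinv : 3/2*R < ‖w⁻¹‖ := by
        rw [norm_inv]
        rw [lt_inv_comm₀ (by positivity) (Complex.abs.pos hw0)]
        exact hwb
      have h1 : DifferentiableAt ℂ hfun w⁻¹ :=
        (hanal _ (by linarith)).differentiableAt
      have h2 : DifferentiableAt ℂ (fun w : ℂ => w⁻¹) w := differentiableAt_inv hw0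
      exact (h1.comp w h2).differentiableWithinAt
    have hb : BddAbove (norm ∘ (fun w : ℂ => hfun w⁻¹) ''
        (Metric.ball (0:ℂ) (3/2*R)⁻¹ \ {0})) := by
      refine ⟨B2, ?_⟩
      rintro x ⟨w, ⟨hw1, hw2⟩, rfl⟩
      have hw0 : w ≠ (0:ℂ) := hw2
      have hwb : ‖w‖ < (3/2*R)⁻¹ := by
        rw [Metric.mem_ball, Complex.dist_eq, sub_zero] at hw1; exact hw1
      have hinv : 3/2*R ≤ ‖w⁻¹‖ := by
        rw [norm_inv]
        rw [le_inv_comm₀ (by positivity) (Complex.abs.pos hw0)]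
        exact hwb.le
      simp only [Function.comp_apply, Complex.norm_eq_abs]
      exact hbdd _ hinv
    have := Complex.differentiableOn_update_limUnder_of_bddAbove hnb hd hb
    rwa [hglim.limUnder_eq] at this
  -- bound for Im g on the sphere of radius (2R)⁻¹
  have hsphere : ∀ w : ℂ, ‖w‖ = (2*R)⁻¹ → |(g w).im| ≤ 2*R := by
    intro w hw
    have hw0 : w ≠ 0 := by
      intro h; rw [h] at hw; simp at hw
      linarith [hw.symm, hR0]
    rw [hgval w hw0]
    set z' := w⁻¹ with hz'
    have habs' : ‖z'‖ = 2*R := by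
      rw [hz', norm_inv, hw, inv_inv]
    have hmain : ∀ y : ℂ, ‖y‖ = 2*R → 0 < y.im → |(hfun y).im| ≤ 2*R := by
      intro y hy hyim
      have h1 : (φ y).im ≤ y.im := imF hc hyim (by rw [hy]; linarith)
      have h2 : 0 < (φ y).im := phi_im_pos hc ⟨hyim, notmem_K_of_abs hc (by rw [hy]; linarith)⟩
      have h3 : |y.im| ≤ ‖y‖ := Complex.abs_im_le_abs y
      rw [abs_le]
      constructor
      · rw [hhdef]; simp only [Complex.sub_im]
        rw [abs_of_pos hyim] at h3
        rw [hy] at h3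
        linarith
      · rw [hhdef]; simp only [Complex.sub_im]
        linarith
    rcases lt_trichotomy z'.im 0 with him | him | him
    · -- conj case
      have hcz : ((starRingEnd ℂ) z').im > 0 := by simpa using him
      have habsc : ‖(starRingEnd ℂ) z'‖ = 2*R := by
        rw [Complex.abs_conj]; exact habs'
      have hmem : (starRingEnd ℂ) z' ∈ SigmaStar K :=
        ext_subset_sigma hc (by rw [habsc]; linarith)
      have hsym := hc.symm ((starRingEnd ℂ) z') hmem
      rw [Complex.conj_conj] at hsym
      have heq : hfun z' = (starRingEnd ℂ) (hfun ((starRingEnd ℂ) z')) := by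
        rw [hhdef]
        simp only
        rw [map_sub, Complex.conj_conj, ← hsym]
      rw [heq]
      have : ((starRingEnd ℂ) (hfun ((starRingEnd ℂ) z'))).im
          = -(hfun ((starRingEnd ℂ) z')).im := Complex.conj_im _
      rw [this, abs_neg]
      exact hmain _ habsc hcz
    · -- real case
      have hmem : z' ∈ SigmaStar K := ext_subset_sigma hc (by rw [habs']; linarith)
      have : (hfun z').im = 0 := by
        rw [hhdef]; simp only [Complex.sub_im, him]
        rw [phi_real hc hmem him]
        ring
      rw [this]; simp; positivity
    · exact hmain _ habs' him
  -- maximum principle for Im g on the disk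
  have hd2R : (0:ℝ) < (2*R)⁻¹ := by positivity
  have hlt : (2*R)⁻¹ < (3/2*R)⁻¹ := by
    rw [inv_lt_inv₀ (by positivity) (by positivity)]
    linarith
  have hgd2 : DifferentiableOn ℂ g (Metric.closedBall 0 (2*R)⁻¹) := by
    apply hgdiff.mono
    intro w hw
    rw [Metric.mem_closedBall] at hw
    rw [Metric.mem_ball]
    linarith
  have happly : ∀ F : ℂ → ℂ, DifferentiableOn ℂ F (Metric.closedBall 0 (2*R)⁻¹) →
      (∀ u ∈ frontier (Metric.ball (0:ℂ) (2*R)⁻¹), ‖F u‖ ≤ Real.exp (2*R)) →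
      ∀ w ∈ Metric.closedBall (0:ℂ) (2*R)⁻¹, ‖F w‖ ≤ Real.exp (2*R) := by
    intro F hFd hFr w hwmem
    have hcl : closure (Metric.ball (0:ℂ) (2*R)⁻¹) = Metric.closedBall (0:ℂ) (2*R)⁻¹ :=
      closure_ball _ (ne_of_gt hd2R)
    apply Complex.norm_le_of_forall_mem_frontier_norm_le Metric.isBounded_ball ?_ hFr ?_
    · refine ⟨hFd.mono Metric.ball_subset_closedBall, ?_⟩
      rw [hcl]
      exact hFd.continuousOn
    · rw [hcl]; exact hwmem
  have hfr_abs : ∀ u : ℂ, u ∈ frontier (Metric.ball (0:ℂ) (2*R)⁻¹) →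
      ‖u‖ = (2*R)⁻¹ := by
    intro u hu
    rw [frontier_ball _ (ne_of_gt hd2R)] at hu
    rw [mem_sphere_iff_norm, sub_zero] at hu
    rw [← Complex.norm_eq_abs]; exact hu
  have him_bound : ∀ w ∈ Metric.closedBall (0:ℂ) (2*R)⁻¹, |(g w).im| ≤ 2*R := by
    intro w hwmem
    have h1 : (g w).im ≤ 2*R := by
      have hFd : DifferentiableOn ℂ (fun v => Complex.exp (-(Complex.I * g v)))
          (Metric.closedBall 0 (2*R)⁻¹) := ((hgd2.const_mul Complex.I).neg).cexp
      have hFr : ∀ u ∈ frontier (Metric.ball (0:ℂ) (2*R)⁻¹),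
          ‖(fun v => Complex.exp (-(Complex.I * g v))) u‖ ≤ Real.exp (2*R) := by
        intro u hu
        rw [Complex.norm_eq_abs, Complex.abs_exp, re_neg_I_mul, Real.exp_le_exp]
        exact (abs_le.mp (hsphere u (hfr_abs u hu))).2
      have := happly _ hFd hFr w hwmem
      rwa [Complex.norm_eq_abs, Complex.abs_exp, re_neg_I_mul, Real.exp_le_exp] at this
    have h2 : -(g w).im ≤ 2*R := by
      have hre : ∀ u : ℂ, (Complex.I * u).re = -u.im := by
        intro u; simp [Complex.mul_re]
      have hFd : DifferentiableOn ℂ (fun v => Complex.exp (Complex.I * g v))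
          (Metric.closedBall 0 (2*R)⁻¹) := (hgd2.const_mul Complex.I).cexp
      have hFr : ∀ u ∈ frontier (Metric.ball (0:ℂ) (2*R)⁻¹),
          ‖(fun v => Complex.exp (Complex.I * g v)) u‖ ≤ Real.exp (2*R) := by
        intro u hu
        rw [Complex.norm_eq_abs, Complex.abs_exp, hre, Real.exp_le_exp]
        linarith [(abs_le.mp (hsphere u (hfr_abs u hu))).1]
      have := happly _ hFd hFr w hwmem
      rwa [Complex.norm_eq_abs, Complex.abs_exp, hre, Real.exp_le_exp] at this
    rw [abs_le]; exact ⟨by linarith, h1⟩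
  -- Borel-Caratheodory via the Schwarz lemma
  set A' : ℝ := 2*R+1 with hA'def
  have hA'0 : (0:ℝ) < A' := by rw [hA'def]; linarith
  set m : ℂ → ℂ := fun w => g w / (g w - 2*(A':ℂ)*Complex.I) with hmdef
  have hmlt : ∀ w ∈ Metric.ball (0:ℂ) (2*R)⁻¹,
      ‖g w‖ < ‖g w - 2*(A':ℂ)*Complex.I‖ := by
    intro w hw
    apply abs_lt_abs_sub_of_im_lt ?_ hA'0
    have h1 := (abs_le.mp (him_bound w (Metric.ball_subset_closedBall hw))).2
    rw [hA'def]; linarith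
  have hmden : ∀ w ∈ Metric.ball (0:ℂ) (2*R)⁻¹, g w - 2*(A':ℂ)*Complex.I ≠ 0 := by
    intro w hw h0
    have := hmlt w hw
    rw [h0] at this
    simp at this
    have h0' : (0:ℝ) ≤ ‖g w‖ := Complex.abs.nonneg _
    linarith
  have hmdiff : DifferentiableOn ℂ m (Metric.ball (0:ℂ) (2*R)⁻¹) := by
    have hgb : DifferentiableOn ℂ g (Metric.ball (0:ℂ) (2*R)⁻¹) :=
      hgd2.mono Metric.ball_subset_closedBall
    exact hgb.div (hgb.sub (differentiableOn_const _)) hmden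
  have hm0 : m 0 = 0 := by
    rw [hmdef]
    simp only
    rw [hg0, zero_div]
  have hmmaps : Set.MapsTo m (Metric.ball (0:ℂ) (2*R)⁻¹) (Metric.ball (m 0) 1) := by
    intro w hw
    rw [hm0, Metric.mem_ball, Complex.dist_eq, sub_zero, hmdef]
    simp only
    rw [norm_div]
    rw [div_lt_one (lt_of_le_of_lt (Complex.abs.nonneg _) (hmlt w hw))]
    exact hmlt w hw
  have habs2A : ‖2*(A':ℂ)*Complex.I‖ = 2*A' := by
    rw [norm_mul, norm_mul, Complex.abs_two, Complex.abs_ofReal, Complex.abs_I,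
      abs_of_pos hA'0, mul_one]
  have hfinal : ∀ w : ℂ, ‖w‖ ≤ (4*R)⁻¹ → ‖g w‖ ≤ 4*R+2 := by
    intro w hw
    have hwball : w ∈ Metric.ball (0:ℂ) (2*R)⁻¹ := by
      rw [Metric.mem_ball, Complex.dist_eq, sub_zero]
      have : (4*R)⁻¹ < (2*R)⁻¹ := by
        rw [inv_lt_inv₀ (by positivity) (by positivity)]; linarith
      linarith
    have hs := Complex.dist_le_div_mul_dist_of_mapsTo_ball hmdiff
      (hmmaps.mono_right Metric.ball_subset_closedBall) hwball
    rw [hm0, Complex.dist_eq, sub_zero, Complex.dist_eq, sub_zero] at hs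
    have hm12 : ‖m w‖ ≤ 1/2 := by
      have h1 : 1/(2*R)⁻¹ = 2*R := by rw [one_div, inv_inv]
      rw [h1] at hs
      calc ‖m w‖ ≤ 2*R * ‖w‖ := hs
        _ ≤ 2*R * (4*R)⁻¹ := by nlinarith [Complex.abs.nonneg w]
        _ = 1/2 := by field_simp; ring
    have hrec : g w = m w * (g w - 2*(A':ℂ)*Complex.I) := by
      rw [hmdef]
      simp only
      rw [div_mul_cancel₀ _ (hmden w hwball)]
    have htri : ‖g w - 2*(A':ℂ)*Complex.I‖ ≤ ‖g w‖ + 2*A' := by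
      calc ‖g w - 2*(A':ℂ)*Complex.I‖
          ≤ ‖g w‖ + ‖2*(A':ℂ)*Complex.I‖ := by
            rw [sub_eq_add_neg]
            calc ‖g w + -(2*(A':ℂ)*Complex.I)‖
                ≤ ‖g w‖ + ‖-(2*(A':ℂ)*Complex.I)‖ :=
                  Complex.abs.add_le _ _
              _ = ‖g w‖ + ‖2*(A':ℂ)*Complex.I‖ := by
                  rw [Complex.abs.map_neg]
        _ = ‖g w‖ + 2*A' := by rw [habs2A]
    have hest : ‖g w‖ ≤ (1/2) * (‖g w‖ + 2*A') := by
      calc ‖g w‖ = ‖m w‖ * ‖g w - 2*(A':ℂ)*Complex.I‖ := by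
            rw [← norm_mul, ← hrec]
        _ ≤ (1/2) * (‖g w‖ + 2*A') := by
            apply mul_le_mul hm12 htri (Complex.abs.nonneg _) (by norm_num)
    rw [hA'def] at hest
    linarith
  have hz0 : z ≠ 0 := by
    intro h
    rw [h] at hz
    simp at hz
    linarith
  have hwle : ‖z⁻¹‖ ≤ (4*R)⁻¹ := by
    rw [norm_inv]
    rw [inv_le_inv₀ (lt_of_lt_of_le (by positivity) hz) (by positivity)]
    exact hz
  have := hfinal z⁻¹ hwle
  rwa [hgval _ (inv_ne_zero hz0), inv_inv] at this


end Stmt6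

open Stmt6

/-- uniform bound |φ_K(z) − z| ≤ M_H on Σ_H* over all hulls K ⊆ H. -/
theorem stmt_6 (H : Set ℂ) (hH : IsHull H) (hne : H.Nonempty) :
    ∃ M : ℝ, 0 < M ∧ ∀ K : Set ℂ, IsHull K → K ⊆ H →
      ∀ (φ : ℂ → ℂ) (c : ℝ), IsExtendedLoewnerMap K φ c →
        ∀ z ∈ SigmaStar H, ‖φ z - z‖ ≤ M := by

  obtain ⟨r0, hr0⟩ := hH.2.1.subset_closedBall 0
  set R := max (r0 + 1) 1 with hRdef
  have hR1 : (1:ℝ) ≤ R := le_max_right _ _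
  have hHR : closure H ⊆ Metric.ball (0:ℂ) R := by
    have h1 : closure H ⊆ Metric.closedBall 0 r0 :=
      closure_minimal hr0 Metric.isClosed_closedBall
    intro w hw
    have h2 := h1 hw
    rw [Metric.mem_closedBall] at h2
    rw [Metric.mem_ball]
    calc dist w 0 ≤ r0 := h2
      _ < r0 + 1 := by linarith
      _ ≤ R := le_max_left _ _
  refine ⟨16*R + 8, by linarith, ?_⟩
  intro K hK hKH φ c hφ z hzS
  have hc : Ctx K φ c R := ⟨hK, hφ, hR1, (closure_mono hKH).trans hHR⟩
  rcases le_or_gt (4*R) (‖z‖) with hbig | hsmall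
  · have := ext_bound hc hbig
    linarith
  · have hKin : ∀ y : ℂ, y ∈ SigmaStar H → 0 < y.im → ‖y‖ ≤ 4*R →
        ‖φ y‖ ≤ 12*R+5 := by
      intro y hyS hyim hy4
      have hyK : y ∈ UHP \ K := ⟨hyim, fun hyK => hyS (Or.inl (Or.inl (hKH hyK)))⟩
      have := clopen hc (ρ := 4*R) (β := 4*R+2) (by linarith) (by linarith)
        (fun ζ hζ => ext_bound hc hζ) hyK hy4
      linarith
    rcases lt_trichotomy z.im 0 with him | him | him
    · -- lower half plane : use symmetry
      have hzcS : (starRingEnd ℂ) z ∈ SigmaStar H := conj_mem_sigma hzS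
      have hzcK : (starRingEnd ℂ) z ∈ SigmaStar K := sigma_mono hKH hzcS
      have hfc := h_conj hc hzcK
      rw [Complex.conj_conj] at hfc
      have habs : ‖φ z - z‖ =
          ‖φ ((starRingEnd ℂ) z) - (starRingEnd ℂ) z‖ := by
        rw [hfc, Complex.abs_conj]
      have hcim : 0 < ((starRingEnd ℂ) z).im := by simpa using him
      have hcabs : ‖(starRingEnd ℂ) z‖ = ‖z‖ := Complex.abs_conj z
      have h1 := hKin _ hzcS hcim (by rw [hcabs]; linarith)
      rw [habs]
      calc ‖φ ((starRingEnd ℂ) z) - (starRingEnd ℂ) z‖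
          ≤ ‖φ ((starRingEnd ℂ) z)‖ + ‖(starRingEnd ℂ) z‖ := by
            rw [sub_eq_add_neg]
            calc ‖φ ((starRingEnd ℂ) z) + -((starRingEnd ℂ) z)‖
                ≤ _ + ‖-((starRingEnd ℂ) z)‖ := Complex.abs.add_le _ _
              _ = _ := by rw [Complex.abs.map_neg]
        _ ≤ 12*R+5 + 4*R := by rw [hcabs]; linarith
        _ ≤ 16*R + 8 := by linarith
    · -- real axis : take limits from the upper half plane
      obtain ⟨r, hr, hball⟩ := Metric.mem_nhds_iff.mp ((isOpen_sigma hH).mem_nhds hzS)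
      have hzK : z ∈ SigmaStar K := sigma_mono hKH hzS
      have hcont : ContinuousAt (fun w => ‖φ w - w‖) z := by
        have h1 : ContinuousAt φ z := (hc.analytic z hzK).continuousAt
        exact (Complex.continuous_abs.continuousAt).comp (h1.sub continuousAt_id)
      have hten : Tendsto (fun t : ℝ => ‖φ (z + t*Complex.I) - (z + t*Complex.I)‖)
          (nhdsWithin 0 (Set.Ioi 0)) (nhds (‖φ z - z‖)) := by
        have hmap : Tendsto (fun t : ℝ => z + t*Complex.I) (nhdsWithin 0 (Set.Ioi 0)) (nhds z) := by
          have hcm : Continuous (fun t : ℝ => z + t*Complex.I) := by continuity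
          have h0 := hcm.tendsto 0
          simp only [Complex.ofReal_zero, zero_mul, add_zero] at h0
          exact h0.mono_left nhdsWithin_le_nhds
        exact hcont.tendsto.comp hmap
      apply le_of_tendsto hten
      have hmem : Set.Ioo (0:ℝ) (min r (4*R - ‖z‖)) ∈ nhdsWithin 0 (Set.Ioi 0) := by
        apply Ioo_mem_nhdsGT_of_mem
        constructor
        · exact le_refl 0
        · exact lt_min hr (by linarith)
      filter_upwards [hmem] with t ht
      have htpos : 0 < t := ht.1
      have htlt : t < min r (4*R - ‖z‖) := ht.2
      set y := z + t*Complex.I with hydef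
      have hyim : 0 < y.im := by rw [hydef]; simp [him, htpos]
      have hyS : y ∈ SigmaStar H := by
        apply hball
        rw [Metric.mem_ball, hydef]
        have : dist (z + t*Complex.I) z = t := by
          rw [Complex.dist_eq, add_sub_cancel_left]
          rw [norm_mul, Complex.abs_I, mul_one, Complex.abs_ofReal, abs_of_pos htpos]
        rw [this]
        exact lt_of_lt_of_le htlt (min_le_left _ _)
      have hy4 : ‖y‖ ≤ 4*R := by
        rw [hydef]
        calc ‖z + t*Complex.I‖ ≤ ‖z‖ + ‖t*Complex.I‖ :=
              Complex.abs.add_le _ _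
          _ = ‖z‖ + t := by
              rw [norm_mul, Complex.abs_I, mul_one, Complex.abs_ofReal, abs_of_pos htpos]
          _ ≤ 4*R := by linarith [lt_of_lt_of_le htlt (min_le_right _ _)]
      have h1 := hKin y hyS hyim hy4
      calc ‖φ y - y‖ ≤ ‖φ y‖ + ‖y‖ := by
            rw [sub_eq_add_neg]
            calc ‖φ y + -y‖ ≤ _ + ‖-y‖ := Complex.abs.add_le _ _
              _ = _ := by rw [Complex.abs.map_neg]
        _ ≤ 12*R+5 + 4*R := by linarith
        _ ≤ 16*R + 8 := by linarith
    · -- upper half plane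
      have h1 := hKin z hzS him hsmall.le
      calc ‖φ z - z‖ ≤ ‖φ z‖ + ‖z‖ := by
            rw [sub_eq_add_neg]
            calc ‖φ z + -z‖ ≤ _ + ‖-z‖ := Complex.abs.add_le _ _
              _ = _ := by rw [Complex.abs.map_neg]
        _ ≤ 12*R+5 + 4*R := by linarith
        _ ≤ 16*R + 8 := by linarith
end
end

section
/- Let f be analytic near a real point x with f'(x) > 0. As w → x, the expression −2f'(x)²f'(w)/(f(w) − f(x))² − 2f''(w)/(w − x) + 2f'(w)/(w − x)² converges to (1/2)·f''(x)²/f'(x) − (4/3)·f'''(x). -/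
open Complex Filter

lemma aux_dslope_analytic {f : ℂ → ℂ} {x : ℂ} (hf : AnalyticAt ℂ f x) :
    AnalyticAt ℂ (dslope f x) x := by
  obtain ⟨p, hp⟩ := hf
  exact ⟨p.fslope, hp.has_fpower_series_dslope_fslope⟩

lemma aux_deriv_analytic {f : ℂ → ℂ} {x : ℂ} (hf : AnalyticAt ℂ f x) :
    AnalyticAt ℂ (deriv f) x := by
  have h := hf.eventually_analyticAt
  rw [Filter.eventually_iff, mem_nhds_iff] at h
  obtain ⟨s, hs, hso, hxs⟩ := h
  exact (AnalyticOnNhd.deriv (fun y hy => hs hy)) x hxs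

lemma aux_factor {f : ℂ → ℂ} {x : ℂ} :
    ∀ w, f w = f x + (w - x) * dslope f x w := by
  intro w
  have := sub_smul_dslope f x w
  rw [smul_eq_mul] at this
  linear_combination -this

lemma aux_dslope_derivs {G : ℂ → ℂ} {x : ℂ} (hG : AnalyticAt ℂ G x) :
    deriv (dslope G x) x = deriv (deriv G) x / 2 ∧
    deriv (deriv (dslope G x)) x = deriv (deriv (deriv G)) x / 3 := by
  set H := dslope G x with hHdef
  have hH : AnalyticAt ℂ H x := aux_dslope_analytic hG
  have hGe : G = fun w => G x + (w - x) * H w := funext (aux_factor)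
  have e2 : deriv G =ᶠ[nhds x] fun w => H w + (w - x) * deriv H w := by
    filter_upwards [hH.eventually_analyticAt] with w hw
    have h1 : HasDerivAt (fun w => G x + (w - x) * H w)
        (1 * H w + (w - x) * deriv H w) w :=
      HasDerivAt.const_add _ (((hasDerivAt_id w).sub_const x).mul hw.differentiableAt.hasDerivAt)
    calc deriv G w = deriv (fun w => G x + (w - x) * H w) w := by rw [← hGe]
      _ = 1 * H w + (w - x) * deriv H w := h1.deriv
      _ = H w + (w - x) * deriv H w := by ring
  have e3 : deriv (deriv G) x = 2 * deriv H x := by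
    rw [e2.deriv_eq]
    have h2 : HasDerivAt (fun w => H w + (w - x) * deriv H w)
        (deriv H x + (1 * deriv H x + (x - x) * deriv (deriv H) x)) x :=
      (hH.differentiableAt.hasDerivAt).add
        (((hasDerivAt_id x).sub_const x).mul
          (aux_deriv_analytic hH).differentiableAt.hasDerivAt)
    rw [h2.deriv]; ring
  have e4 : deriv (deriv G) =ᶠ[nhds x]
      fun w => 2 * deriv H w + (w - x) * deriv (deriv H) w := by
    refine e2.deriv.trans ?_
    filter_upwards [hH.eventually_analyticAt] with w hw
    have h3 : HasDerivAt (fun w => H w + (w - x) * deriv H w)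
        (deriv H w + (1 * deriv H w + (w - x) * deriv (deriv H) w)) w :=
      hw.differentiableAt.hasDerivAt.add
        (((hasDerivAt_id w).sub_const x).mul
          (aux_deriv_analytic hw).differentiableAt.hasDerivAt)
    rw [h3.deriv]; ring
  have e5 : deriv (deriv (deriv G)) x = 3 * deriv (deriv H) x := by
    rw [e4.deriv_eq]
    have h4 : HasDerivAt (fun w => 2 * deriv H w + (w - x) * deriv (deriv H) w)
        (2 * deriv (deriv H) x + (1 * deriv (deriv H) x
          + (x - x) * deriv (deriv (deriv H)) x)) x :=
      ((aux_deriv_analytic hH).differentiableAt.hasDerivAt.const_mul 2).add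
        (((hasDerivAt_id x).sub_const x).mul
          (aux_deriv_analytic (aux_deriv_analytic hH)).differentiableAt.hasDerivAt)
    rw [h4.deriv]; ring
  exact ⟨by linear_combination -e3 / 2, by linear_combination -e5 / 3⟩

/-- as w → x,
−2f'(x)²f'(w)/(f(w)−f(x))² − 2f''(w)/(w−x) + 2f'(w)/(w−x)²
→ (1/2)f''(x)²/f'(x) − (4/3)f'''(x). -/
theorem stmt_16 (f : ℂ → ℂ) (x : ℝ) (hf : AnalyticAt ℂ f (x : ℂ))
    (hreal : ∀ᶠ y : ℝ in nhds x, (f (y : ℂ)).im = 0)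
    (him : (deriv f (x : ℂ)).im = 0) (hpos : 0 < (deriv f (x : ℂ)).re) :
    Tendsto (fun w : ℂ =>
        -2 * (deriv f (x : ℂ)) ^ 2 * deriv f w / (f w - f (x : ℂ)) ^ 2
          - 2 * deriv (deriv f) w / (w - (x : ℂ))
          + 2 * deriv f w / (w - (x : ℂ)) ^ 2)
      (nhdsWithin (x : ℂ) {((x : ℂ))}ᶜ)
      (nhds ((1/2) * (deriv (deriv f) (x : ℂ)) ^ 2 / (deriv f (x : ℂ))
        - (4/3) * deriv (deriv (deriv f)) (x : ℂ))) := by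
  set x' : ℂ := (x : ℂ) with hx'def
  have ha₁ : deriv f x' ≠ 0 := by
    intro h; rw [h] at hpos; simp at hpos
  set a₁ := deriv f x' with ha₁def
  set h := dslope f x' with hhdef
  set k := dslope h x' with hkdef
  set l := dslope k x' with hldef
  set u := dslope (deriv f) x' with hudef
  set q := dslope (deriv (deriv f)) x' with hqdef
  have hfd : AnalyticAt ℂ (deriv f) x' := aux_deriv_analytic hf
  have hfdd : AnalyticAt ℂ (deriv (deriv f)) x' := aux_deriv_analytic hfd
  have hh : AnalyticAt ℂ h x' := aux_dslope_analytic hf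
  have hk : AnalyticAt ℂ k x' := aux_dslope_analytic hh
  have hl : AnalyticAt ℂ l x' := aux_dslope_analytic hk
  have hu : AnalyticAt ℂ u x' := aux_dslope_analytic hfd
  have hq : AnalyticAt ℂ q x' := aux_dslope_analytic hfdd
  have vh : h x' = a₁ := dslope_same f x'
  have vk : k x' = deriv (deriv f) x' / 2 :=
    (dslope_same h x').trans (aux_dslope_derivs hf).1
  have vl : l x' = deriv (deriv (deriv f)) x' / 6 := by
    have t1 : deriv k x' = deriv (deriv h) x' / 2 := (aux_dslope_derivs hh).1
    have t2 : deriv (deriv h) x' = deriv (deriv (deriv f)) x' / 3 :=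
      (aux_dslope_derivs hf).2
    have t3 : l x' = deriv k x' := dslope_same k x'
    rw [t3, t1, t2]; ring
  have vu : u x' = deriv (deriv f) x' := dslope_same (deriv f) x'
  have vq : q x' = deriv (deriv (deriv f)) x' := dslope_same (deriv (deriv f)) x'
  -- the rational function with removable singularity
  set C : ℂ → ℂ := fun w =>
      (2*a₁^2*(l w) + 2*a₁*(u w)*(k x') + a₁*(k x')*(k w) - (q w)*a₁^2 - 4*a₁*(k x')*(k w))
      + (w - x') * (2*a₁*(u w)*(l w) + a₁*(l w)*(k w) + (u w)*(k x')*(k w)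
          - 2*(k x')*(k w)^2 - 2*a₁*(k w)*(q w))
      + (w - x')^2 * ((u w)*(l w)*(k w) - (q w)*(k w)^2) with hCdef
  have hcu := hu.continuousAt
  have hck := hk.continuousAt
  have hcl := hl.continuousAt
  have hcq := hq.continuousAt
  have hCc : ContinuousAt C x' := by
    simp only [hCdef]; fun_prop
  have hhx : h x' ^ 2 ≠ 0 := by rw [vh]; exact pow_ne_zero 2 ha₁
  have hG : ContinuousAt (fun w => 2 * C w / (h w)^2) x' :=
    (continuousAt_const.mul hCc).div ((hh.continuousAt).pow 2) hhx
  -- eventual equality on the punctured neighborhood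
  have hne : ∀ᶠ w in nhds x', h w ≠ 0 := by
    apply hh.continuousAt.eventually_ne
    rw [vh]; exact ha₁
  have heq : (fun w : ℂ =>
        -2 * a₁ ^ 2 * deriv f w / (f w - f x') ^ 2
          - 2 * deriv (deriv f) w / (w - x')
          + 2 * deriv f w / (w - x') ^ 2)
      =ᶠ[nhdsWithin x' {x'}ᶜ] (fun w => 2 * C w / (h w)^2) := by
    filter_upwards [self_mem_nhdsWithin, eventually_nhdsWithin_of_eventually_nhds hne]
      with w hw hhw
    have hwne : w - x' ≠ 0 := sub_ne_zero.mpr hw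
    have hsub : f w - f x' = (w - x') * h w := by
      have := aux_factor (f := f) (x := x') w
      rw [← hhdef] at this
      linear_combination this
    have e1 : deriv f w = a₁ + (w - x') * u w := by
      have := aux_factor (f := deriv f) (x := x') w
      rw [← hudef] at this; exact this
    have e2 : deriv (deriv f) w = deriv (deriv f) x' + (w - x') * q w := by
      have := aux_factor (f := deriv (deriv f)) (x := x') w
      rw [← hqdef] at this; exact this
    have e3 : h w = a₁ + (w - x') * k w := by
      have := aux_factor (f := h) (x := x') w
      rw [← hkdef, vh] at this; exact this
    have e4 : k w = k x' + (w - x') * l w := by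
      have := aux_factor (f := k) (x := x') w
      rw [← hldef] at this; exact this
    have e5 : deriv (deriv f) x' = 2 * k x' := by rw [vk]; ring
    rw [hsub]
    simp only [hCdef]
    field_simp
    rw [e1, e2, e3, e4, e5]
    ring
  -- conclude
  have hlim : Tendsto (fun w => 2 * C w / (h w)^2) (nhdsWithin x' {x'}ᶜ)
      (nhds (2 * C x' / (h x')^2)) :=
    hG.continuousWithinAt.tendsto
  have hval : 2 * C x' / (h x')^2
      = (1/2) * (deriv (deriv f) x') ^ 2 / a₁ - (4/3) * deriv (deriv (deriv f)) x' := by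
    simp only [hCdef, vh, vk, vl, vu, vq, sub_self]
    field_simp
    ring
  rw [← hval]
  exact hlim.congr' heq.symm
end
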